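/- arXiv:1705.02126 — 4 statements merged into one kernel-verified Lean document; each statement's English description precedes it below -/
import Mathlib

section
/- In the interacting reinforced stochastic process model, if P(⋂_{j=1}^N {Z_{0,j} = 0}) + P(⋂_{j=1}^N {Z_{0,j} = 1}) < 1, then P(0 < Z_∞ < 1) > 0. -/
open MeasureTheory ProbabilityTheory Filter Finset Topology

noncomputable section

/-- The natural filtration σ-field `F_n = σ(Z_{0,h} : h) ∨ σ(X_{k,j} : 1 ≤ k ≤ n, j)`. -/
def filtSigma {Ω : Type*} {N : ℕ} (Z0 : Ω → Fin N → ℝ) (X : ℕ → Ω → Fin N → ℝ) (n : ℕ) :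
    MeasurableSpace Ω :=
  MeasurableSpace.comap Z0 inferInstance ⊔
    ⨆ k ∈ Set.Icc 1 n, MeasurableSpace.comap (X k) inferInstance

/-- A system of `N` interacting reinforced stochastic processes located at the vertices of a
weighted directed graph with (column-normalized) weighted adjacency matrix `w`. -/
structure InteractingRSP (N : ℕ) (Ω : Type*) [mΩ : MeasurableSpace Ω]
    [StandardBorelSpace Ω] (P : Measure Ω) [IsProbabilityMeasure P] where
  w : Matrix (Fin N) (Fin N) ℝ
  r : ℕ → ℝ
  c : ℝ
  γ : ℝ
  Z : ℕ → Ω → Fin N → ℝ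
  X : ℕ → Ω → Fin N → ℝ
  c_pos : 0 < c
  γ_gt : 1 / 2 < γ
  γ_le : γ ≤ 1
  r_nonneg : ∀ n, 0 ≤ r n
  r_lt_one : ∀ n, r n < 1
  r_lim : Tendsto (fun n : ℕ => (n : ℝ) ^ γ * r n) atTop (𝓝 c)
  w_nonneg : ∀ h j, 0 ≤ w h j
  w_colsum : ∀ j, ∑ h, w h j = 1
  w_irred : ∀ i j, ∃ k : ℕ, 0 < k ∧ 0 < (w ^ k) i j
  w_diag : ∃ Q D : Matrix (Fin N) (Fin N) ℂ, IsUnit Q.det ∧ D.IsDiag ∧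
    w.map Complex.ofReal = Q * D * Q⁻¹
  F_le : ∀ n, filtSigma (Z 0) X n ≤ mΩ
  Z0_meas : Measurable (Z 0)
  X_meas : ∀ n, Measurable (X n)
  Z0_mem : ∀ ω j, Z 0 ω j ∈ Set.Icc (0 : ℝ) 1
  X_mem : ∀ n ω j, 1 ≤ n → X n ω j = 0 ∨ X n ω j = 1
  Z_rec : ∀ n ω j, Z (n + 1) ω j = (1 - r n) * Z n ω j + r n * X (n + 1) ω j
  condIndep : ∀ n, iCondIndepFun (filtSigma (Z 0) X n) (F_le n)
      (fun j ω => X (n + 1) ω j) P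
  condProb : ∀ n j, P[(fun ω => X (n + 1) ω j) | filtSigma (Z 0) X n]
      =ᵐ[P] fun ω => ∑ h, w h j * Z n ω h

lemma exists_perron {N : ℕ} (hN : 1 ≤ N) (w : Matrix (Fin N) (Fin N) ℝ)
    (hw0 : ∀ h j, 0 ≤ w h j) (hcol : ∀ j, ∑ h, w h j = 1)
    (hirr : ∀ i j, ∃ k : ℕ, 0 < k ∧ 0 < (w ^ k) i j) :
    ∃ v : Fin N → ℝ, (∀ j, 0 < v j) ∧ (∑ j, v j = 1) ∧ (∀ i, ∑ j, w i j * v j = v i) := by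
  haveI : NeZero N := ⟨by omega⟩
  -- the matrix A = w - 1 is singular
  have hdet : (w - 1).det = 0 := by
    rw [← Matrix.det_transpose]
    rw [← Matrix.exists_mulVec_eq_zero_iff (M := (w - 1).transpose)]
    refine ⟨fun _ => 1, ?_, ?_⟩
    · intro h
      have := congrFun h ⟨0, by omega⟩
      norm_num at this
    · funext j
      simp only [Matrix.mulVec, dotProduct, Matrix.transpose_apply, Matrix.sub_apply,
        mul_one, Pi.zero_apply]
      rw [Finset.sum_sub_distrib, hcol]
      simp [Matrix.one_apply]
  obtain ⟨v, hv_ne, hv⟩ := (Matrix.exists_mulVec_eq_zero_iff).mpr hdet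
  have hfix : ∀ i, ∑ j, w i j * v j = v i := by
    intro i
    have := congrFun hv i
    simp only [Matrix.mulVec, dotProduct, Matrix.sub_apply, sub_mul,
      Finset.sum_sub_distrib, Matrix.one_apply, ite_mul, one_mul, zero_mul,
      Finset.sum_ite_eq, Finset.sum_ite_eq', Finset.mem_univ, if_true, Pi.zero_apply] at this
    linarith [this]
  set u : Fin N → ℝ := fun i => |v i| with hu
  have huge : ∀ i, u i ≤ ∑ j, w i j * u j := by
    intro i
    calc u i = |∑ j, w i j * v j| := by rw [hfix]
    _ ≤ ∑ j, |w i j * v j| := Finset.abs_sum_le_sum_abs _ _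
    _ = ∑ j, w i j * u j := by
        refine Finset.sum_congr rfl fun j _ => ?_
        rw [abs_mul, abs_of_nonneg (hw0 i j)]
  have hsum_eq : ∑ i, ∑ j, w i j * u j = ∑ i, u i := by
    rw [Finset.sum_comm]
    refine Finset.sum_congr rfl fun j _ => ?_
    rw [← Finset.sum_mul, hcol, one_mul]
  have hufix : ∀ i, ∑ j, w i j * u j = u i := by
    have h0 : ∑ i, ((∑ j, w i j * u j) - u i) = 0 := by
      rw [Finset.sum_sub_distrib, hsum_eq, sub_self]
    intro i
    have := (Finset.sum_eq_zero_iff_of_nonneg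
      (fun i _ => sub_nonneg.mpr (huge i))).mp h0 i (Finset.mem_univ i)
    linarith [this]
  -- powers fix u and are nonneg
  have hpow_nonneg : ∀ k : ℕ, ∀ i j, 0 ≤ (w ^ k) i j := by
    intro k
    induction k with
    | zero => intro i j; simp [Matrix.one_apply]; positivity
    | succ k ih =>
      intro i j
      rw [pow_succ, Matrix.mul_apply]
      exact Finset.sum_nonneg fun l _ => mul_nonneg (ih i l) (hw0 l j)
  have hpow_fix : ∀ k : ℕ, ∀ i, ∑ j, (w ^ k) i j * u j = u i := by
    intro k
    induction k with
    | zero => intro i; simp [Matrix.one_apply, Finset.sum_ite_eq]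
    | succ k ih =>
      intro i
      have : ∀ j, (w ^ (k+1)) i j = ∑ l, (w ^ k) i l * w l j := by
        intro j; rw [pow_succ, Matrix.mul_apply]
      simp_rw [this, Finset.sum_mul]
      rw [Finset.sum_comm]
      calc ∑ l, ∑ j, (w ^ k) i l * w l j * u j
          = ∑ l, (w ^ k) i l * ∑ j, w l j * u j := by
            refine Finset.sum_congr rfl fun l _ => ?_
            rw [Finset.mul_sum]; refine Finset.sum_congr rfl fun j _ => by ring
        _ = u i := by simp_rw [hufix]; exact ih i
  have hu_nonneg : ∀ i, 0 ≤ u i := fun i => abs_nonneg _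
  obtain ⟨j0, hj0⟩ : ∃ j0, 0 < u j0 := by
    by_contra h
    push_neg at h
    apply hv_ne
    funext i
    have := le_antisymm (h i) (hu_nonneg i)
    simpa [hu, abs_eq_zero] using this.symm ▸ (abs_eq_zero.mp (le_antisymm (h i) (hu_nonneg i)))
  have hu_pos : ∀ i, 0 < u i := by
    intro i
    obtain ⟨k, -, hk⟩ := hirr i j0
    have := hpow_fix k i
    have hle : (w ^ k) i j0 * u j0 ≤ ∑ j, (w ^ k) i j * u j :=
      Finset.single_le_sum (f := fun j => (w ^ k) i j * u j)
        (fun j _ => mul_nonneg (hpow_nonneg k i j) (hu_nonneg j)) (Finset.mem_univ j0)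
    have hpos : 0 < (w ^ k) i j0 * u j0 := mul_pos hk hj0
    rw [this] at hle
    linarith
  set s := ∑ j, u j with hs
  have hs_pos : 0 < s := Finset.sum_pos (fun j _ => hu_pos j) ⟨⟨0, by omega⟩, Finset.mem_univ _⟩
  refine ⟨fun j => u j / s, fun j => div_pos (hu_pos j) hs_pos, ?_, ?_⟩
  · rw [← Finset.sum_div, div_self (ne_of_gt hs_pos)]
  · intro i
    rw [eq_div_iff (ne_of_gt hs_pos), Finset.sum_mul]
    calc ∑ j, w i j * (u j / s) * s = ∑ j, w i j * u j := by
          refine Finset.sum_congr rfl fun j _ => ?_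
          field_simp
      _ = u i := hufix i


section Aux

variable {N : ℕ} {Ω : Type*} [mΩ : MeasurableSpace Ω] [StandardBorelSpace Ω]
  {P : Measure Ω} [IsProbabilityMeasure P] (M : InteractingRSP N Ω P)

lemma bdd_integrable {f : Ω → ℝ} (hf : Measurable f) (C : ℝ) (h : ∀ ω, |f ω| ≤ C) :
    Integrable f P := by
  refine (integrable_const C).mono' hf.aestronglyMeasurable ?_
  exact Filter.Eventually.of_forall fun ω => by simpa using h ω

lemma measZ : ∀ n, Measurable (M.Z n) := by
  intro n
  induction n with
  | zero => exact M.Z0_meas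
  | succ n ih =>
    have h : M.Z (n+1) = fun ω j => (1 - M.r n) * M.Z n ω j + M.r n * M.X (n+1) ω j := by
      funext ω j; exact M.Z_rec n ω j
    rw [h]
    exact measurable_pi_lambda _ fun j =>
      (((measurable_pi_apply j).comp ih).const_mul _).add
        (((measurable_pi_apply j).comp (M.X_meas (n+1))).const_mul _)

lemma Zmem : ∀ n ω j, M.Z n ω j ∈ Set.Icc (0:ℝ) 1 := by
  intro n
  induction n with
  | zero => exact M.Z0_mem
  | succ n ih =>
    intro ω j
    have hr0 := M.r_nonneg n; have hr1 := M.r_lt_one n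
    have hz := ih ω j
    have hx : M.X (n+1) ω j = 0 ∨ M.X (n+1) ω j = 1 := M.X_mem (n+1) ω j (by omega)
    simp only [Set.mem_Icc] at *
    rw [M.Z_rec n ω j]
    rcases hx with hx | hx <;> rw [hx] <;> constructor <;> nlinarith [hz.1, hz.2]

lemma filt_mono {n m : ℕ} (h : n ≤ m) :
    filtSigma (M.Z 0) M.X n ≤ filtSigma (M.Z 0) M.X m := by
  refine sup_le_sup le_rfl ?_
  refine iSup_le fun k => iSup_le fun hk => ?_
  exact le_iSup₂ (f := fun k (_ : k ∈ Set.Icc 1 m) => MeasurableSpace.comap (M.X k) inferInstance)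
    k ⟨hk.1, hk.2.trans h⟩

lemma measZ_filt : ∀ n, Measurable[filtSigma (M.Z 0) M.X n] (M.Z n) := by
  intro n
  induction n with
  | zero => exact Measurable.of_comap_le le_sup_left
  | succ n ih =>
    have hZ : Measurable[filtSigma (M.Z 0) M.X (n+1)] (M.Z n) :=
      ih.mono (filt_mono M (Nat.le_succ n)) le_rfl
    have hX : Measurable[filtSigma (M.Z 0) M.X (n+1)] (M.X (n+1)) := by
      refine Measurable.of_comap_le (le_trans ?_ le_sup_right)
      exact le_iSup₂
        (f := fun k (_ : k ∈ Set.Icc 1 (n+1)) => MeasurableSpace.comap (M.X k) inferInstance)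
        (n+1) ⟨by omega, le_rfl⟩
    have h : M.Z (n+1) = fun ω j => (1 - M.r n) * M.Z n ω j + M.r n * M.X (n+1) ω j := by
      funext ω j; exact M.Z_rec n ω j
    rw [h]
    have hcomp : ∀ j, Measurable[filtSigma (M.Z 0) M.X (n+1)]
        fun ω => (1 - M.r n) * M.Z n ω j + M.r n * M.X (n+1) ω j := by
      intro j
      exact (((measurable_pi_apply j).comp hZ).const_mul _).add
        (((measurable_pi_apply j).comp hX).const_mul _)
    exact (@measurable_pi_iff Ω _ _ (filtSigma (M.Z 0) M.X (n+1)) _ _).mpr hcomp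

lemma nonempty_Ω (P : Measure Ω) [IsProbabilityMeasure P] : Nonempty Ω := by
  by_contra h
  rw [not_nonempty_iff] at h
  have h1 : P Set.univ = 1 := measure_univ
  rw [Set.univ_eq_empty_iff.mpr h, measure_empty] at h1
  exact zero_ne_one h1

lemma key_int (n : ℕ) (j : Fin N) (g : Ω → ℝ)
    (hg : Measurable[filtSigma (M.Z 0) M.X n] g) (C : ℝ) (hgb : ∀ ω, |g ω| ≤ C) :
    ∫ ω, g ω * M.X (n+1) ω j ∂P = ∫ ω, g ω * (∑ h, M.w h j * M.Z n ω h) ∂P := by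
  have hΩ : Nonempty Ω := nonempty_Ω P
  have hC : 0 ≤ C := le_trans (abs_nonneg _) (hgb (Classical.arbitrary Ω))
  have hm : filtSigma (M.Z 0) M.X n ≤ mΩ := M.F_le n
  have hXmeas : Measurable fun ω => M.X (n+1) ω j := (measurable_pi_apply j).comp (M.X_meas (n+1))
  have hXb : ∀ ω, |M.X (n+1) ω j| ≤ 1 := by
    intro ω; rcases M.X_mem (n+1) ω j (by omega) with h | h <;> rw [h] <;> norm_num
  have hXint : Integrable (fun ω => M.X (n+1) ω j) P := bdd_integrable hXmeas 1 hXb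
  have hgmΩ : Measurable g := hg.mono hm le_rfl
  have hprodint : Integrable (fun ω => g ω * M.X (n+1) ω j) P := by
    refine bdd_integrable (hgmΩ.mul hXmeas) C fun ω => ?_
    rw [abs_mul]
    calc |g ω| * |M.X (n+1) ω j| ≤ C * 1 :=
          mul_le_mul (hgb ω) (hXb ω) (abs_nonneg _) hC
      _ = C := mul_one C
  have h1 : P[(fun ω => g ω * M.X (n+1) ω j) | filtSigma (M.Z 0) M.X n]
      =ᵐ[P] g * P[(fun ω => M.X (n+1) ω j) | filtSigma (M.Z 0) M.X n] :=
    condExp_mul_of_stronglyMeasurable_left hg.stronglyMeasurable hprodint hXint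
  calc ∫ ω, g ω * M.X (n+1) ω j ∂P
      = ∫ ω, (P[(fun ω => g ω * M.X (n+1) ω j) | filtSigma (M.Z 0) M.X n]) ω ∂P :=
        (integral_condExp hm).symm
    _ = ∫ ω, g ω * (P[(fun ω => M.X (n+1) ω j) | filtSigma (M.Z 0) M.X n]) ω ∂P :=
        integral_congr_ae h1
    _ = ∫ ω, g ω * (∑ h, M.w h j * M.Z n ω h) ∂P := by
        refine integral_congr_ae ?_
        filter_upwards [M.condProb n j] with ω hω
        rw [hω]

lemma key_int2 (n : ℕ) {j k : Fin N} (hjk : j ≠ k) (g : Ω → ℝ)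
    (hg : Measurable[filtSigma (M.Z 0) M.X n] g) (C : ℝ) (hgb : ∀ ω, |g ω| ≤ C) :
    ∫ ω, g ω * (M.X (n+1) ω j * M.X (n+1) ω k) ∂P
      = ∫ ω, g ω * ((∑ h, M.w h j * M.Z n ω h) * (∑ h, M.w h k * M.Z n ω h)) ∂P := by
  have hΩ : Nonempty Ω := nonempty_Ω P
  have hC : 0 ≤ C := le_trans (abs_nonneg _) (hgb (Classical.arbitrary Ω))
  have hm : filtSigma (M.Z 0) M.X n ≤ mΩ := M.F_le n
  have hXmeas : ∀ i : Fin N, Measurable fun ω => M.X (n+1) ω i :=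
    fun i => (measurable_pi_apply i).comp (M.X_meas (n+1))
  have hXb : ∀ (i : Fin N) ω, |M.X (n+1) ω i| ≤ 1 := by
    intro i ω; rcases M.X_mem (n+1) ω i (by omega) with h | h <;> rw [h] <;> norm_num
  set A : Fin N → Set Ω := fun i => (fun ω => M.X (n+1) ω i) ⁻¹' ({1} : Set ℝ) with hA
  have hXind : ∀ i : Fin N,
      (fun ω => M.X (n+1) ω i) = Set.indicator (A i) (fun _ => (1:ℝ)) := by
    intro i; funext ω
    rcases M.X_mem (n+1) ω i (by omega) with h | h <;>
      simp [hA, Set.indicator_apply, Set.mem_preimage, h]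
  have hXXind : (fun ω => M.X (n+1) ω j * M.X (n+1) ω k)
      = Set.indicator (A j ∩ A k) (fun _ => (1:ℝ)) := by
    funext ω
    rcases M.X_mem (n+1) ω j (by omega) with h1 | h1 <;>
      rcases M.X_mem (n+1) ω k (by omega) with h2 | h2 <;>
      simp [hA, Set.indicator_apply, Set.mem_inter_iff, Set.mem_preimage, h1, h2]
  have hCI := (iCondIndepFun_iff_condExp_inter_preimage_eq_mul
      (m' := filtSigma (M.Z 0) M.X n) (hm' := M.F_le n)
      (fun _ : Fin N => inferInstance) (fun i ω => M.X (n+1) ω i) hXmeas).mp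
      (M.condIndep n)
  have h2 := hCI ({j, k} : Finset (Fin N)) (sets := fun _ => ({1} : Set ℝ))
      (fun i _ => measurableSet_singleton 1)
  have e1 : (⋂ i ∈ ({j, k} : Finset (Fin N)),
      (fun i ω => M.X (n+1) ω i) i ⁻¹' ({1} : Set ℝ)) = A j ∩ A k := by
    rw [Finset.set_biInter_insert, Finset.set_biInter_singleton]
  rw [e1, Finset.prod_pair hjk] at h2
  have h3 : P[(fun ω => M.X (n+1) ω j * M.X (n+1) ω k) | filtSigma (M.Z 0) M.X n]
      =ᵐ[P] fun ω => (∑ h, M.w h j * M.Z n ω h) * (∑ h, M.w h k * M.Z n ω h) := by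
    have e2 : P[(fun ω => M.X (n+1) ω j * M.X (n+1) ω k) | filtSigma (M.Z 0) M.X n]
        = P⟦A j ∩ A k | filtSigma (M.Z 0) M.X n⟧ := by rw [hXXind]
    rw [e2]
    refine h2.trans ?_
    have e3 : ∀ i : Fin N, P⟦A i | filtSigma (M.Z 0) M.X n⟧
        =ᵐ[P] fun ω => ∑ h, M.w h i * M.Z n ω h := by
      intro i
      have : P⟦A i | filtSigma (M.Z 0) M.X n⟧
          = P[(fun ω => M.X (n+1) ω i) | filtSigma (M.Z 0) M.X n] := by rw [hXind i]
      rw [this]; exact M.condProb n i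
    filter_upwards [e3 j, e3 k] with ω hj hk
    simp only [Pi.mul_apply]
    rw [hj, hk]
  -- now the integral computation
  have hXXmeas : Measurable fun ω => M.X (n+1) ω j * M.X (n+1) ω k := (hXmeas j).mul (hXmeas k)
  have hXXb : ∀ ω, |M.X (n+1) ω j * M.X (n+1) ω k| ≤ 1 := by
    intro ω; rw [abs_mul]
    calc |M.X (n+1) ω j| * |M.X (n+1) ω k| ≤ 1 * 1 :=
        mul_le_mul (hXb j ω) (hXb k ω) (abs_nonneg _) zero_le_one
      _ = 1 := mul_one 1
  have hXXint : Integrable (fun ω => M.X (n+1) ω j * M.X (n+1) ω k) P :=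
    bdd_integrable hXXmeas 1 hXXb
  have hgmΩ : Measurable g := hg.mono hm le_rfl
  have hprodint : Integrable (fun ω => g ω * (M.X (n+1) ω j * M.X (n+1) ω k)) P := by
    refine bdd_integrable (hgmΩ.mul hXXmeas) C fun ω => ?_
    rw [abs_mul]
    calc |g ω| * |M.X (n+1) ω j * M.X (n+1) ω k| ≤ C * 1 :=
        mul_le_mul (hgb ω) (hXXb ω) (abs_nonneg _) hC
      _ = C := mul_one C
  have h1 : P[(fun ω => g ω * (M.X (n+1) ω j * M.X (n+1) ω k)) | filtSigma (M.Z 0) M.X n]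
      =ᵐ[P] g * P[(fun ω => M.X (n+1) ω j * M.X (n+1) ω k) | filtSigma (M.Z 0) M.X n] :=
    condExp_mul_of_stronglyMeasurable_left hg.stronglyMeasurable hprodint hXXint
  calc ∫ ω, g ω * (M.X (n+1) ω j * M.X (n+1) ω k) ∂P
      = ∫ ω, (P[(fun ω => g ω * (M.X (n+1) ω j * M.X (n+1) ω k))
          | filtSigma (M.Z 0) M.X n]) ω ∂P := (integral_condExp hm).symm
    _ = ∫ ω, g ω * (P[(fun ω => M.X (n+1) ω j * M.X (n+1) ω k)
          | filtSigma (M.Z 0) M.X n]) ω ∂P := integral_congr_ae h1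
    _ = ∫ ω, g ω * ((∑ h, M.w h j * M.Z n ω h) * (∑ h, M.w h k * M.Z n ω h)) ∂P := by
        refine integral_congr_ae ?_
        filter_upwards [h3] with ω hω
        rw [hω]

lemma sum_meas {α : Type*} {m : MeasurableSpace α} {N : ℕ} {f : Fin N → α → ℝ}
    (hf : ∀ j, Measurable[m] (f j)) : Measurable[m] fun ω => ∑ j, f j ω := by
  haveI := m
  exact Finset.measurable_sum _ fun j _ => hf j

lemma hsum_ite {N : ℕ} (f g : Fin N → ℝ) (i : Fin N) :
    ∑ l, (if i = l then f l else g l) = (∑ l, g l) + (f i - g i) := by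
  have h : ∀ l, (if i = l then f l else g l) = g l + (if i = l then f l - g l else 0) := by
    intro l; by_cases h : i = l <;> simp [h]
  simp_rw [h, Finset.sum_add_distrib, Finset.sum_ite_eq, Finset.mem_univ, if_true]

lemma abs01 {a : ℝ} (h0 : 0 ≤ a) (h1 : a ≤ 1) : |a| ≤ 1 :=
  abs_le.mpr ⟨by linarith, h1⟩

lemma abs_mul2 {a b : ℝ} (ha0 : 0 ≤ a) (ha1 : a ≤ 1) (hb0 : 0 ≤ b) (hb1 : b ≤ 1) :
    |a * b| ≤ 1 := abs01 (mul_nonneg ha0 hb0) (mul_le_one₀ ha1 hb0 hb1)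

lemma abs_mul3 {a b c : ℝ} (ha0 : 0 ≤ a) (ha1 : a ≤ 1) (hb0 : 0 ≤ b) (hb1 : b ≤ 1)
    (hc0 : 0 ≤ c) (hc1 : c ≤ 1) : |a * b * c| ≤ 1 :=
  abs_mul2 (mul_nonneg ha0 hb0) (mul_le_one₀ ha1 hb0 hb1) hc0 hc1

lemma abs_sq01 {a : ℝ} (h0 : 0 ≤ a) (h1 : a ≤ 1) : |a^2| ≤ 1 := by
  rw [sq]; exact abs_mul2 h0 h1 h0 h1

lemma abs_selfcomp {a : ℝ} (h0 : 0 ≤ a) (h1 : a ≤ 1) : |a * (1 - a)| ≤ 1 :=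
  abs_mul2 h0 h1 (by linarith) (by linarith)

lemma jensen_aux {N : ℕ} (v p : Fin N → ℝ) (hv0 : ∀ j, 0 < v j) (hv1 : ∑ j, v j = 1)
    (hp : ∀ i, 0 ≤ p i ∧ p i ≤ 1) :
    (∑ i, v i * p i)^2 + ∑ i, (v i)^2 * (p i - (p i)^2) ≤ ∑ i, v i * p i := by
  have hv_le1 : ∀ j, v j ≤ 1 := by
    intro j
    calc v j ≤ ∑ l, v l := Finset.single_le_sum (fun l _ => (hv0 l).le) (Finset.mem_univ j)
      _ = 1 := hv1
  have h1 : ∑ i, (v i)^2 * (p i - (p i)^2) ≤ ∑ i, v i * (p i - (p i)^2) :=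
    Finset.sum_le_sum fun i _ => by
      have hpp : 0 ≤ p i - (p i)^2 := by nlinarith [(hp i).1, (hp i).2]
      have hv2 : (v i)^2 ≤ v i := by nlinarith [hv0 i, hv_le1 i]
      nlinarith [mul_le_mul_of_nonneg_right hv2 hpp]
  have expand : ∑ i, v i * (p i - (∑ l, v l * p l))^2
      = (∑ i, v i * (p i)^2) - (∑ l, v l * p l)^2 := by
    have e : ∀ i, v i * (p i - (∑ l, v l * p l))^2
        = v i * (p i)^2 - 2*(∑ l, v l * p l)*(v i * p i) + (∑ l, v l * p l)^2 * v i :=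
      fun i => by ring
    rw [Finset.sum_congr rfl fun i _ => e i, Finset.sum_add_distrib, Finset.sum_sub_distrib,
      ← Finset.mul_sum, ← Finset.mul_sum, hv1]
    ring
  have h2 : 0 ≤ ∑ i, v i * (p i - (∑ l, v l * p l))^2 :=
    Finset.sum_nonneg fun i _ => mul_nonneg (hv0 i).le (sq_nonneg _)
  have h3 : ∑ i, v i * (p i - (p i)^2) = (∑ l, v l * p l) - ∑ i, v i * (p i)^2 := by
    have e : ∀ i, v i * (p i - (p i)^2) = v i * p i - v i * (p i)^2 := fun i => by ring
    rw [Finset.sum_congr rfl fun i _ => e i, Finset.sum_sub_distrib]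
  linarith

lemma double_sum_eq {N : ℕ} (v p : Fin N → ℝ) :
    ∑ i, ∑ l, (if i = l then (v i * v i) * p i else (v i * v l) * (p i * p l))
      = (∑ i, v i * p i)^2 + ∑ i, (v i)^2 * (p i - (p i)^2) := by
  have e : ∀ i : Fin N, ∑ l, (if i = l then (v i * v i) * p i else (v i * v l) * (p i * p l))
      = (∑ l, (v i * v l) * (p i * p l)) + ((v i * v i) * p i - (v i * v i) * (p i * p i)) := by
    intro i
    exact hsum_ite (fun _ => (v i * v i) * p i) (fun l => (v i * v l) * (p i * p l)) i
  rw [Finset.sum_congr rfl fun i _ => e i, Finset.sum_add_distrib]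
  have e2 : ∑ i : Fin N, ∑ l, (v i * v l) * (p i * p l) = (∑ i, v i * p i)^2 := by
    rw [sq, Finset.sum_mul_sum]
    exact Finset.sum_congr rfl fun i _ => Finset.sum_congr rfl fun l _ => by ring
  have e3 : ∑ i : Fin N, ((v i * v i) * p i - (v i * v i) * (p i * p i))
      = ∑ i, (v i)^2 * (p i - (p i)^2) := Finset.sum_congr rfl fun i _ => by ring
  rw [e2, e3]

lemma stepV (v : Fin N → ℝ) (hv0 : ∀ j, 0 < v j) (hv1 : ∑ j, v j = 1)
    (hfix : ∀ i, ∑ l, M.w i l * v l = v i) (n : ℕ) :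
    (1 - (M.r n)^2) * ∫ ω, (∑ j, v j * M.Z n ω j) * (1 - ∑ j, v j * M.Z n ω j) ∂P
      ≤ ∫ ω, (∑ j, v j * M.Z (n+1) ω j) * (1 - ∑ j, v j * M.Z (n+1) ω j) ∂P := by
  have hr0 := M.r_nonneg n
  have hr1 := M.r_lt_one n
  have hZ01 := Zmem M n
  have hv_le1 : ∀ j, v j ≤ 1 := by
    intro j
    calc v j ≤ ∑ l, v l := Finset.single_le_sum (fun l _ => (hv0 l).le) (Finset.mem_univ j)
      _ = 1 := hv1
  -- measurability (ambient)
  have mZ : ∀ j : Fin N, Measurable fun ω => M.Z n ω j :=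
    fun j => (measurable_pi_apply j).comp (measZ M n)
  have mX : ∀ i : Fin N, Measurable fun ω => M.X (n+1) ω i :=
    fun i => (measurable_pi_apply i).comp (M.X_meas (n+1))
  have mq : Measurable fun ω => ∑ j, v j * M.Z n ω j :=
    sum_meas fun j => (mZ j).const_mul (v j)
  have mp : ∀ i : Fin N, Measurable fun ω => ∑ h, M.w h i * M.Z n ω h :=
    fun i => sum_meas fun h => (mZ h).const_mul (M.w h i)
  have mS : Measurable fun ω => ∑ i, v i * M.X (n+1) ω i :=
    sum_meas fun i => (mX i).const_mul (v i)
  -- filtration measurability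
  have mZf : ∀ j : Fin N, Measurable[filtSigma (M.Z 0) M.X n] fun ω => M.Z n ω j :=
    fun j => (measurable_pi_apply j).comp (measZ_filt M n)
  have mqf : Measurable[filtSigma (M.Z 0) M.X n] fun ω => ∑ j, v j * M.Z n ω j :=
    sum_meas fun j => (mZf j).const_mul (v j)
  -- bounds
  have hX01 : ∀ (i : Fin N) ω, 0 ≤ M.X (n+1) ω i ∧ M.X (n+1) ω i ≤ 1 := by
    intro i ω; rcases M.X_mem (n+1) ω i (by omega) with h | h <;> rw [h] <;> norm_num
  have hq01 : ∀ ω, 0 ≤ (∑ j, v j * M.Z n ω j) ∧ (∑ j, v j * M.Z n ω j) ≤ 1 := by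
    intro ω
    constructor
    · exact Finset.sum_nonneg fun j _ => mul_nonneg (hv0 j).le (hZ01 ω j).1
    · calc ∑ j, v j * M.Z n ω j ≤ ∑ j, v j * 1 :=
          Finset.sum_le_sum fun j _ => mul_le_mul_of_nonneg_left (hZ01 ω j).2 (hv0 j).le
        _ = 1 := by simp [hv1]
  have hp01 : ∀ (i : Fin N) ω, 0 ≤ (∑ h, M.w h i * M.Z n ω h)
      ∧ (∑ h, M.w h i * M.Z n ω h) ≤ 1 := by
    intro i ω
    constructor
    · exact Finset.sum_nonneg fun h _ => mul_nonneg (M.w_nonneg h i) (hZ01 ω h).1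
    · calc ∑ h, M.w h i * M.Z n ω h ≤ ∑ h, M.w h i * 1 :=
          Finset.sum_le_sum fun h _ => mul_le_mul_of_nonneg_left (hZ01 ω h).2 (M.w_nonneg h i)
        _ = 1 := by simp [M.w_colsum i]
  have hS01 : ∀ ω, 0 ≤ (∑ i, v i * M.X (n+1) ω i) ∧ (∑ i, v i * M.X (n+1) ω i) ≤ 1 := by
    intro ω
    constructor
    · exact Finset.sum_nonneg fun i _ => mul_nonneg (hv0 i).le (hX01 i ω).1
    · calc ∑ i, v i * M.X (n+1) ω i ≤ ∑ i, v i * 1 :=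
          Finset.sum_le_sum fun i _ => mul_le_mul_of_nonneg_left (hX01 i ω).2 (hv0 i).le
        _ = 1 := by simp [hv1]
  -- integrability
  have iq : Integrable (fun ω => ∑ j, v j * M.Z n ω j) P :=
    bdd_integrable mq 1 fun ω => abs01 (hq01 ω).1 (hq01 ω).2
  have iq2 : Integrable (fun ω => (∑ j, v j * M.Z n ω j)^2) P :=
    bdd_integrable (mq.pow_const 2) 1 fun ω => abs_sq01 (hq01 ω).1 (hq01 ω).2
  have iqq : Integrable (fun ω => (∑ j, v j * M.Z n ω j) * (1 - ∑ j, v j * M.Z n ω j)) P :=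
    bdd_integrable (mq.mul (measurable_const.sub mq)) 1 fun ω =>
      abs_selfcomp (hq01 ω).1 (hq01 ω).2
  -- step 1 : ∫ S = ∫ q
  have I1 : ∫ ω, (∑ i, v i * M.X (n+1) ω i) ∂P = ∫ ω, (∑ j, v j * M.Z n ω j) ∂P := by
    rw [integral_finset_sum Finset.univ (fun i _ =>
      bdd_integrable ((mX i).const_mul (v i)) 1 fun ω =>
        abs_mul2 (hv0 i).le (hv_le1 i) (hX01 i ω).1 (hX01 i ω).2)]
    have e : ∀ i : Fin N, ∫ ω, v i * M.X (n+1) ω i ∂P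
        = ∫ ω, v i * (∑ h, M.w h i * M.Z n ω h) ∂P := by
      intro i
      exact key_int M n i (fun _ => v i) measurable_const (v i)
        (fun ω => by rw [abs_of_nonneg (hv0 i).le])
    rw [Finset.sum_congr rfl fun i _ => e i]
    rw [← integral_finset_sum Finset.univ (fun i _ =>
      bdd_integrable ((mp i).const_mul (v i)) 1 fun ω =>
        abs_mul2 (hv0 i).le (hv_le1 i) (hp01 i ω).1 (hp01 i ω).2)]
    refine integral_congr_ae (Filter.Eventually.of_forall fun ω => ?_)
    calc ∑ i, v i * ∑ h, M.w h i * M.Z n ω h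
        = ∑ i, ∑ h, (M.w h i * v i) * M.Z n ω h := by
          refine Finset.sum_congr rfl fun i _ => ?_
          rw [Finset.mul_sum]
          exact Finset.sum_congr rfl fun h _ => by ring
      _ = ∑ h, ∑ i, (M.w h i * v i) * M.Z n ω h := Finset.sum_comm
      _ = ∑ h, (∑ i, M.w h i * v i) * M.Z n ω h := by
          refine Finset.sum_congr rfl fun h _ => ?_
          rw [Finset.sum_mul]
      _ = ∑ j, v j * M.Z n ω j := by
          refine Finset.sum_congr rfl fun h _ => ?_
          rw [hfix h]
  have f1 : ∀ ω, ∑ i, v i * (∑ h, M.w h i * M.Z n ω h) = ∑ j, v j * M.Z n ω j := by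
    intro ω
    calc ∑ i, v i * ∑ h, M.w h i * M.Z n ω h
        = ∑ i, ∑ h, (M.w h i * v i) * M.Z n ω h := by
          refine Finset.sum_congr rfl fun i _ => ?_
          rw [Finset.mul_sum]
          exact Finset.sum_congr rfl fun h _ => by ring
      _ = ∑ h, ∑ i, (M.w h i * v i) * M.Z n ω h := Finset.sum_comm
      _ = ∑ h, (∑ i, M.w h i * v i) * M.Z n ω h := by
          refine Finset.sum_congr rfl fun h _ => ?_
          rw [Finset.sum_mul]
      _ = ∑ j, v j * M.Z n ω j := by
          refine Finset.sum_congr rfl fun h _ => ?_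
          rw [hfix h]
  -- step 2 : ∫ q S = ∫ q²
  have I2 : ∫ ω, (∑ j, v j * M.Z n ω j) * (∑ i, v i * M.X (n+1) ω i) ∂P
      = ∫ ω, (∑ j, v j * M.Z n ω j)^2 ∂P := by
    have e0 : ∀ ω, (∑ j, v j * M.Z n ω j) * (∑ i, v i * M.X (n+1) ω i)
        = ∑ i, (v i * (∑ j, v j * M.Z n ω j)) * M.X (n+1) ω i := by
      intro ω
      rw [Finset.mul_sum]
      exact Finset.sum_congr rfl fun i _ => by ring
    rw [integral_congr_ae (Filter.Eventually.of_forall e0)]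
    rw [integral_finset_sum Finset.univ
      (f := fun i ω => (v i * (∑ j, v j * M.Z n ω j)) * M.X (n+1) ω i) (fun i _ =>
      bdd_integrable ((mq.const_mul (v i)).mul (mX i)) 1 fun ω =>
        abs_mul3 (hv0 i).le (hv_le1 i) (hq01 ω).1 (hq01 ω).2 (hX01 i ω).1 (hX01 i ω).2)]
    have e : ∀ i : Fin N, ∫ ω, (v i * (∑ j, v j * M.Z n ω j)) * M.X (n+1) ω i ∂P
        = ∫ ω, (v i * (∑ j, v j * M.Z n ω j)) * (∑ h, M.w h i * M.Z n ω h) ∂P := by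
      intro i
      refine key_int M n i _ (mqf.const_mul (v i)) (v i) fun ω => ?_
      rw [abs_mul, abs_of_nonneg (hv0 i).le]
      calc v i * |∑ j, v j * M.Z n ω j| ≤ v i * 1 := by
            refine mul_le_mul_of_nonneg_left ?_ (hv0 i).le
            exact abs_le.mpr ⟨by linarith [(hq01 ω).1], (hq01 ω).2⟩
        _ = v i := mul_one _
    rw [Finset.sum_congr rfl fun i _ => e i]
    rw [← integral_finset_sum Finset.univ
      (f := fun i ω => (v i * (∑ j, v j * M.Z n ω j)) * (∑ h, M.w h i * M.Z n ω h)) (fun i _ =>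
      bdd_integrable ((mq.const_mul (v i)).mul (mp i)) 1 fun ω =>
        abs_mul3 (hv0 i).le (hv_le1 i) (hq01 ω).1 (hq01 ω).2 (hp01 i ω).1 (hp01 i ω).2)]
    refine integral_congr_ae (Filter.Eventually.of_forall fun ω => ?_)
    calc ∑ i, (v i * (∑ j, v j * M.Z n ω j)) * (∑ h, M.w h i * M.Z n ω h)
        = (∑ j, v j * M.Z n ω j) * ∑ i, v i * (∑ h, M.w h i * M.Z n ω h) := by
          rw [Finset.mul_sum]
          exact Finset.sum_congr rfl fun i _ => by ring
      _ = (∑ j, v j * M.Z n ω j)^2 := by rw [f1]; ring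
  -- step 3 : ∫ S² ≤ ∫ q
  have hXb : ∀ (i : Fin N) ω, |M.X (n+1) ω i| ≤ 1 :=
    fun i ω => abs01 (hX01 i ω).1 (hX01 i ω).2
  have IS2 : ∫ ω, (∑ i, v i * M.X (n+1) ω i)^2 ∂P ≤ ∫ ω, (∑ j, v j * M.Z n ω j) ∂P := by
    have e0 : ∀ ω, (∑ i, v i * M.X (n+1) ω i)^2
        = ∑ i, ∑ l, (v i * v l) * (M.X (n+1) ω i * M.X (n+1) ω l) := by
      intro ω
      rw [sq, Finset.sum_mul_sum]
      exact Finset.sum_congr rfl fun i _ => Finset.sum_congr rfl fun l _ => by ring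
    have iterm : ∀ i l : Fin N,
        Integrable (fun ω => (v i * v l) * (M.X (n+1) ω i * M.X (n+1) ω l)) P := by
      intro i l
      refine bdd_integrable (((mX i).mul (mX l)).const_mul _) |v i * v l| fun ω => ?_
      rw [abs_mul]
      refine mul_le_of_le_one_right (abs_nonneg _) ?_
      rw [abs_mul]
      exact mul_le_one₀ (hXb i ω) (abs_nonneg _) (hXb l ω)
    have ifterm : ∀ i l : Fin N, Integrable (fun ω =>
        if i = l then (v i * v i) * (∑ h, M.w h i * M.Z n ω h)
        else (v i * v l) * ((∑ h, M.w h i * M.Z n ω h) * (∑ h, M.w h l * M.Z n ω h))) P := by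
      intro i l
      by_cases h : i = l
      · simp only [h, if_true]
        exact bdd_integrable ((mp l).const_mul _) |v l * v l|
          fun ω => by
            rw [abs_mul]
            refine mul_le_of_le_one_right (abs_nonneg _) ?_
            exact abs01 (hp01 l ω).1 (hp01 l ω).2
      · simp only [h, if_false]
        exact bdd_integrable (((mp i).mul (mp l)).const_mul _) |v i * v l|
          fun ω => by
            rw [abs_mul]
            refine mul_le_of_le_one_right (abs_nonneg _) ?_
            rw [abs_mul]
            refine mul_le_one₀ ?_ (abs_nonneg _) ?_
            · exact abs01 (hp01 i ω).1 (hp01 i ω).2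
            · exact abs01 (hp01 l ω).1 (hp01 l ω).2
    calc ∫ ω, (∑ i, v i * M.X (n+1) ω i)^2 ∂P
        = ∫ ω, ∑ i, ∑ l, (v i * v l) * (M.X (n+1) ω i * M.X (n+1) ω l) ∂P :=
          integral_congr_ae (Filter.Eventually.of_forall e0)
      _ = ∑ i, ∑ l, ∫ ω, (v i * v l) * (M.X (n+1) ω i * M.X (n+1) ω l) ∂P := by
          rw [integral_finset_sum Finset.univ (fun i _ =>
            integrable_finset_sum Finset.univ (fun l _ => iterm i l))]
          exact Finset.sum_congr rfl fun i _ =>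
            integral_finset_sum Finset.univ (fun l _ => iterm i l)
      _ = ∑ i, ∑ l, ∫ ω, (if i = l then (v i * v i) * (∑ h, M.w h i * M.Z n ω h)
            else (v i * v l) * ((∑ h, M.w h i * M.Z n ω h) * (∑ h, M.w h l * M.Z n ω h))) ∂P := by
          refine Finset.sum_congr rfl fun i _ => Finset.sum_congr rfl fun l _ => ?_
          by_cases h : i = l
          · subst h
            simp only [if_true]
            have ee : ∀ ω, (v i * v i) * (M.X (n+1) ω i * M.X (n+1) ω i)
                = (v i * v i) * M.X (n+1) ω i := by
              intro ω
              rcases M.X_mem (n+1) ω i (by omega) with hx | hx <;> rw [hx] <;> ring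
            rw [integral_congr_ae (Filter.Eventually.of_forall ee)]
            exact key_int M n i (fun _ => v i * v i) measurable_const |v i * v i|
              (fun ω => le_refl _)
          · simp only [h, if_false]
            exact key_int2 M n h (fun _ => v i * v l) measurable_const |v i * v l|
              (fun ω => le_refl _)
      _ = ∫ ω, ∑ i, ∑ l, (if i = l then (v i * v i) * (∑ h, M.w h i * M.Z n ω h)
            else (v i * v l) * ((∑ h, M.w h i * M.Z n ω h) * (∑ h, M.w h l * M.Z n ω h))) ∂P := by
          rw [integral_finset_sum Finset.univ (fun i _ =>
            integrable_finset_sum Finset.univ (fun l _ => ifterm i l))]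
          exact (Finset.sum_congr rfl fun i _ =>
            (integral_finset_sum Finset.univ (fun l _ => ifterm i l))).symm
      _ ≤ ∫ ω, (∑ j, v j * M.Z n ω j) ∂P := by
          refine integral_mono (integrable_finset_sum Finset.univ (fun i _ =>
            integrable_finset_sum Finset.univ (fun l _ => ifterm i l))) iq fun ω => ?_
          have hd := double_sum_eq v (fun i => ∑ h, M.w h i * M.Z n ω h)
          rw [hd]
          have := jensen_aux v (fun i => ∑ h, M.w h i * M.Z n ω h) hv0 hv1
            (fun i => hp01 i ω)
          calc (∑ i, v i * (∑ h, M.w h i * M.Z n ω h))^2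
              + ∑ i, (v i)^2 * ((∑ h, M.w h i * M.Z n ω h) - (∑ h, M.w h i * M.Z n ω h)^2)
              ≤ ∑ i, v i * (∑ h, M.w h i * M.Z n ω h) := this
            _ = ∑ j, v j * M.Z n ω j := f1 ω
  -- recursion identity
  have f2 : ∀ ω, (∑ j, v j * M.Z (n+1) ω j)
      = (1 - M.r n) * (∑ j, v j * M.Z n ω j) + M.r n * (∑ i, v i * M.X (n+1) ω i) := by
    intro ω
    rw [Finset.mul_sum, Finset.mul_sum, ← Finset.sum_add_distrib]
    refine Finset.sum_congr rfl fun j _ => ?_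
    rw [M.Z_rec n ω j]; ring
  -- integrability of S, S², qS, q', q'²
  have iS : Integrable (fun ω => ∑ i, v i * M.X (n+1) ω i) P :=
    bdd_integrable mS 1 fun ω => abs01 (hS01 ω).1 (hS01 ω).2
  have iS2 : Integrable (fun ω => (∑ i, v i * M.X (n+1) ω i)^2) P :=
    bdd_integrable (mS.pow_const 2) 1 fun ω => abs_sq01 (hS01 ω).1 (hS01 ω).2
  have iqS : Integrable (fun ω => (∑ j, v j * M.Z n ω j) * (∑ i, v i * M.X (n+1) ω i)) P :=
    bdd_integrable (mq.mul mS) 1 fun ω =>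
      abs_mul2 (hq01 ω).1 (hq01 ω).2 (hS01 ω).1 (hS01 ω).2
  -- ∫ q' and ∫ q'²
  have E1 : ∫ ω, (∑ j, v j * M.Z (n+1) ω j) ∂P = ∫ ω, (∑ j, v j * M.Z n ω j) ∂P := by
    rw [integral_congr_ae (Filter.Eventually.of_forall f2)]
    rw [integral_add (iq.const_mul _) (iS.const_mul _), integral_const_mul _ _, integral_const_mul _ _,
      I1]
    ring
  have E2 : ∫ ω, (∑ j, v j * M.Z (n+1) ω j)^2 ∂P
      = (1 - M.r n)^2 * (∫ ω, (∑ j, v j * M.Z n ω j)^2 ∂P)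
        + 2*(M.r n)*(1 - M.r n) * (∫ ω, (∑ j, v j * M.Z n ω j)^2 ∂P)
        + (M.r n)^2 * ∫ ω, (∑ i, v i * M.X (n+1) ω i)^2 ∂P := by
    have e : ∀ ω, (∑ j, v j * M.Z (n+1) ω j)^2
        = (1 - M.r n)^2 * (∑ j, v j * M.Z n ω j)^2
          + (2*(M.r n)*(1 - M.r n)) * ((∑ j, v j * M.Z n ω j) * (∑ i, v i * M.X (n+1) ω i))
          + (M.r n)^2 * (∑ i, v i * M.X (n+1) ω i)^2 := by
      intro ω
      rw [f2 ω]; ring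
    rw [integral_congr_ae (Filter.Eventually.of_forall e)]
    have i1 : Integrable (fun ω => (1 - M.r n)^2 * (∑ j, v j * M.Z n ω j)^2) P :=
      iq2.const_mul _
    have i2 : Integrable (fun ω => (2*(M.r n)*(1 - M.r n))
        * ((∑ j, v j * M.Z n ω j) * (∑ i, v i * M.X (n+1) ω i))) P := iqS.const_mul _
    have i3 : Integrable (fun ω => (M.r n)^2 * (∑ i, v i * M.X (n+1) ω i)^2) P :=
      iS2.const_mul _
    have i12 : Integrable (fun ω => (1 - M.r n)^2 * (∑ j, v j * M.Z n ω j)^2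
        + (2*(M.r n)*(1 - M.r n))
          * ((∑ j, v j * M.Z n ω j) * (∑ i, v i * M.X (n+1) ω i))) P := i1.add i2
    calc ∫ ω, ((1 - M.r n)^2 * (∑ j, v j * M.Z n ω j)^2
          + (2*(M.r n)*(1 - M.r n))
            * ((∑ j, v j * M.Z n ω j) * (∑ i, v i * M.X (n+1) ω i))
          + (M.r n)^2 * (∑ i, v i * M.X (n+1) ω i)^2) ∂P
        = (∫ ω, ((1 - M.r n)^2 * (∑ j, v j * M.Z n ω j)^2
          + (2*(M.r n)*(1 - M.r n))
            * ((∑ j, v j * M.Z n ω j) * (∑ i, v i * M.X (n+1) ω i))) ∂P)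
          + ∫ ω, (M.r n)^2 * (∑ i, v i * M.X (n+1) ω i)^2 ∂P := integral_add i12 i3
      _ = (∫ ω, (1 - M.r n)^2 * (∑ j, v j * M.Z n ω j)^2 ∂P)
          + (∫ ω, (2*(M.r n)*(1 - M.r n))
            * ((∑ j, v j * M.Z n ω j) * (∑ i, v i * M.X (n+1) ω i)) ∂P)
          + ∫ ω, (M.r n)^2 * (∑ i, v i * M.X (n+1) ω i)^2 ∂P := by
            rw [integral_add i1 i2]
      _ = (1 - M.r n)^2 * (∫ ω, (∑ j, v j * M.Z n ω j)^2 ∂P)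
          + 2*(M.r n)*(1 - M.r n) * (∫ ω, (∑ j, v j * M.Z n ω j)^2 ∂P)
          + (M.r n)^2 * ∫ ω, (∑ i, v i * M.X (n+1) ω i)^2 ∂P := by
            rw [integral_const_mul _ _, integral_const_mul _ _, integral_const_mul _ _, I2]
  -- final assembly
  have mq' : Measurable fun ω => ∑ j, v j * M.Z (n+1) ω j :=
    sum_meas fun j => ((measurable_pi_apply j).comp (measZ M (n+1))).const_mul (v j)
  have hq'01 : ∀ ω, 0 ≤ (∑ j, v j * M.Z (n+1) ω j) ∧ (∑ j, v j * M.Z (n+1) ω j) ≤ 1 := by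
    intro ω
    constructor
    · exact Finset.sum_nonneg fun j _ => mul_nonneg (hv0 j).le (Zmem M (n+1) ω j).1
    · calc ∑ j, v j * M.Z (n+1) ω j ≤ ∑ j, v j * 1 :=
          Finset.sum_le_sum fun j _ =>
            mul_le_mul_of_nonneg_left (Zmem M (n+1) ω j).2 (hv0 j).le
        _ = 1 := by simp [hv1]
  have iq' : Integrable (fun ω => ∑ j, v j * M.Z (n+1) ω j) P :=
    bdd_integrable mq' 1 fun ω => abs01 (hq'01 ω).1 (hq'01 ω).2
  have iq'2 : Integrable (fun ω => (∑ j, v j * M.Z (n+1) ω j)^2) P :=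
    bdd_integrable (mq'.pow_const 2) 1 fun ω => abs_sq01 (hq'01 ω).1 (hq'01 ω).2
  have D1 : ∫ ω, (∑ j, v j * M.Z n ω j) * (1 - ∑ j, v j * M.Z n ω j) ∂P
      = (∫ ω, (∑ j, v j * M.Z n ω j) ∂P) - ∫ ω, (∑ j, v j * M.Z n ω j)^2 ∂P := by
    have e : ∀ ω, (∑ j, v j * M.Z n ω j) * (1 - ∑ j, v j * M.Z n ω j)
        = (∑ j, v j * M.Z n ω j) - (∑ j, v j * M.Z n ω j)^2 := fun ω => by ring
    rw [integral_congr_ae (Filter.Eventually.of_forall e), integral_sub iq iq2]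
  have D2 : ∫ ω, (∑ j, v j * M.Z (n+1) ω j) * (1 - ∑ j, v j * M.Z (n+1) ω j) ∂P
      = (∫ ω, (∑ j, v j * M.Z (n+1) ω j) ∂P) - ∫ ω, (∑ j, v j * M.Z (n+1) ω j)^2 ∂P := by
    have e : ∀ ω, (∑ j, v j * M.Z (n+1) ω j) * (1 - ∑ j, v j * M.Z (n+1) ω j)
        = (∑ j, v j * M.Z (n+1) ω j) - (∑ j, v j * M.Z (n+1) ω j)^2 := fun ω => by ring
    rw [integral_congr_ae (Filter.Eventually.of_forall e), integral_sub iq' iq'2]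
  rw [D1, D2, E1, E2]
  nlinarith [mul_le_mul_of_nonneg_left IS2 (sq_nonneg (M.r n))]

end Aux

lemma exp_neg_le {x : ℝ} (h0 : 0 ≤ x) (h1 : x ≤ 1/2) : Real.exp (-(2*x)) ≤ 1 - x := by
  have h2 : 2*x + 1 ≤ Real.exp (2*x) := Real.add_one_le_exp (2*x)
  have hE : 0 < Real.exp (2*x) := Real.exp_pos _
  rw [Real.exp_neg]
  have h4 : (Real.exp (2*x))⁻¹ * Real.exp (2*x) = 1 := inv_mul_cancel₀ (ne_of_gt hE)
  have h5 : 0 < (Real.exp (2*x))⁻¹ := inv_pos.mpr hE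
  have h6 : (Real.exp (2*x))⁻¹ * (2*x+1) ≤ 1 := by
    calc (Real.exp (2*x))⁻¹ * (2*x+1) ≤ (Real.exp (2*x))⁻¹ * Real.exp (2*x) :=
        mul_le_mul_of_nonneg_left h2 h5.le
      _ = 1 := h4
  nlinarith [mul_nonneg h0 (by linarith : (0:ℝ) ≤ 1 - 2*x), h5.le]

lemma r_facts (r : ℕ → ℝ) (γ c : ℝ) (hγ1 : 1/2 < γ) (hc : 0 < c) (h0 : ∀ n, 0 ≤ r n)
    (hlim : Tendsto (fun n : ℕ => (n:ℝ)^γ * r n) atTop (𝓝 c)) :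
    Summable (fun n => (r n)^2) ∧ Tendsto r atTop (𝓝 0) := by
  have hγ0 : 0 < γ := by linarith
  -- r tends to 0
  have hinv : Tendsto (fun n : ℕ => ((n:ℝ)^γ)⁻¹) atTop (𝓝 0) := by
    have h := (tendsto_rpow_neg_atTop hγ0).comp tendsto_natCast_atTop_atTop (α := ℕ)
    refine h.congr' ?_
    filter_upwards [eventually_ge_atTop 1] with n hn
    have hn' : (0:ℝ) < (n:ℝ) := by positivity
    simp only [Function.comp_apply]
    rw [Real.rpow_neg hn'.le]
  have hto : Tendsto r atTop (𝓝 0) := by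
    have h := hlim.mul hinv
    rw [mul_zero] at h
    refine h.congr' ?_
    filter_upwards [eventually_ge_atTop 1] with n hn
    have hn' : (0:ℝ) < (n:ℝ) := by positivity
    have : ((n:ℝ)^γ) ≠ 0 := by positivity
    field_simp
  refine ⟨?_, hto⟩
  -- summability
  obtain ⟨K, hK⟩ : ∃ K : ℕ, ∀ n ≥ K, (n:ℝ)^γ * r n ≤ c + 1 := by
    have := hlim.eventually (eventually_le_nhds (lt_add_one c))
    exact eventually_atTop.mp this
  set K' := K + 1 with hK'
  have hsum_shift : Summable (fun n : ℕ => (r (n + K'))^2) := by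
    have hbase : Summable (fun n : ℕ => ((n:ℝ)^(2*γ))⁻¹) :=
      Real.summable_nat_rpow_inv.mpr (by linarith)
    have hbase' : Summable (fun n : ℕ => (((n + K' : ℕ) : ℝ)^(2*γ))⁻¹) :=
      (summable_nat_add_iff K').mpr hbase
    have hbase'' : Summable (fun n : ℕ => (c+1)^2 * ((((n + K' : ℕ)) : ℝ)^(2*γ))⁻¹) :=
      hbase'.mul_left _
    refine Summable.of_nonneg_of_le (fun n => sq_nonneg _) (fun n => ?_) hbase''
    have hn1 : 1 ≤ n + K' := by omega
    have hnpos : (0:ℝ) < ((n + K' : ℕ) : ℝ) := by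
      have : (1:ℝ) ≤ ((n + K' : ℕ) : ℝ) := by exact_mod_cast hn1
      linarith
    have hpow_pos : (0:ℝ) < ((n + K' : ℕ) : ℝ)^γ := Real.rpow_pos_of_pos hnpos _
    have hr_le : r (n + K') ≤ (c+1) * (((n + K' : ℕ) : ℝ)^γ)⁻¹ := by
      have h := hK (n + K') (by omega)
      rw [mul_comm] at h
      rw [← le_div_iff₀ hpow_pos] at h
      rwa [div_eq_mul_inv] at h
    have hsq : (r (n + K'))^2 ≤ ((c+1) * (((n + K' : ℕ) : ℝ)^γ)⁻¹)^2 := by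
      have h0' := h0 (n + K')
      nlinarith [hr_le]
    calc (r (n + K'))^2 ≤ ((c+1) * (((n + K' : ℕ) : ℝ)^γ)⁻¹)^2 := hsq
      _ = (c+1)^2 * ((((n + K' : ℕ) : ℝ)^γ)^2)⁻¹ := by rw [mul_pow, ← inv_pow]
      _ = (c+1)^2 * ((((n + K' : ℕ) : ℝ))^(2*γ))⁻¹ := by
          congr 2
          rw [← Real.rpow_natCast (((n + K' : ℕ) : ℝ)^γ) 2, ← Real.rpow_mul hnpos.le]
          norm_num
          rw [mul_comm]
  exact (summable_nat_add_iff K').mp hsum_shift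

lemma prod_lb (r : ℕ → ℝ) (h0 : ∀ n, 0 ≤ r n) (h1 : ∀ n, r n < 1)
    (hsum : Summable (fun n => (r n)^2)) (hto : Tendsto r atTop (𝓝 0)) :
    ∃ C : ℝ, 0 < C ∧ ∀ n, C ≤ ∏ k ∈ Finset.range n, (1 - (r k)^2) := by
  obtain ⟨K, hK⟩ : ∃ K : ℕ, ∀ n ≥ K, (r n)^2 ≤ 1/2 := by
    have h := hto.eventually (eventually_le_nhds (show (0:ℝ) < 1/2 by norm_num))
    obtain ⟨K, hK⟩ := eventually_atTop.mp h
    exact ⟨K, fun n hn => by nlinarith [hK n hn, h0 n]⟩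
  have hfac_pos : ∀ k, 0 < 1 - (r k)^2 := fun k => by nlinarith [h0 k, h1 k]
  have hfac_le1 : ∀ k, 1 - (r k)^2 ≤ 1 := fun k => by nlinarith [h0 k, sq_nonneg (r k)]
  have hQpos : ∀ n, 0 < ∏ k ∈ Finset.range n, (1 - (r k)^2) :=
    fun n => Finset.prod_pos fun k _ => hfac_pos k
  have hanti : ∀ a b : ℕ, a ≤ b →
      ∏ k ∈ Finset.range b, (1 - (r k)^2) ≤ ∏ k ∈ Finset.range a, (1 - (r k)^2) := by
    intro a b hab
    rw [← Finset.prod_range_mul_prod_Ico _ hab]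
    refine mul_le_of_le_one_right (hQpos a).le ?_
    exact Finset.prod_le_one (fun k _ => (hfac_pos k).le) (fun k _ => hfac_le1 k)
  set T := ∑' n, (r n)^2 with hT
  refine ⟨(∏ k ∈ Finset.range K, (1 - (r k)^2)) * Real.exp (-(2*T)),
    mul_pos (hQpos K) (Real.exp_pos _), fun n => ?_⟩
  rcases le_total n K with h | h
  · calc (∏ k ∈ Finset.range K, (1 - (r k)^2)) * Real.exp (-(2*T))
        ≤ (∏ k ∈ Finset.range K, (1 - (r k)^2)) * 1 :=
          mul_le_mul_of_nonneg_left (Real.exp_le_one_iff.mpr (by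
            have : (0:ℝ) ≤ T := tsum_nonneg fun k => sq_nonneg _
            linarith)) (hQpos K).le
      _ = ∏ k ∈ Finset.range K, (1 - (r k)^2) := mul_one _
      _ ≤ ∏ k ∈ Finset.range n, (1 - (r k)^2) := hanti n K h
  · rw [← Finset.prod_range_mul_prod_Ico _ h]
    refine mul_le_mul_of_nonneg_left ?_ (hQpos K).le
    calc Real.exp (-(2*T)) ≤ Real.exp (∑ k ∈ Finset.Ico K n, -(2*(r k)^2)) := by
          refine Real.exp_le_exp.mpr ?_
          have hle : ∑ k ∈ Finset.Ico K n, (r k)^2 ≤ T :=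
            Summable.sum_le_tsum _ (fun k _ => sq_nonneg _) hsum
          have e : ∑ k ∈ Finset.Ico K n, -(2*(r k)^2)
              = -(2 * ∑ k ∈ Finset.Ico K n, (r k)^2) := by
            rw [Finset.mul_sum, ← Finset.sum_neg_distrib]
          rw [e]
          linarith
      _ = ∏ k ∈ Finset.Ico K n, Real.exp (-(2*(r k)^2)) := Real.exp_sum _ _
      _ ≤ ∏ k ∈ Finset.Ico K n, (1 - (r k)^2) :=
          Finset.prod_le_prod (fun k _ => (Real.exp_pos _).le)
            (fun k hk => exp_neg_le (sq_nonneg _) (hK k (Finset.mem_Ico.mp hk).1))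

/-- **The limit is non-degenerate with positive probability** (Theorem `th:sincro` (ii)):
if `P(⋂_j {Z_{0,j} = 0}) + P(⋂_j {Z_{0,j} = 1}) < 1`, then `P(0 < Z_∞ < 1) > 0`. -/
theorem Zinf_in_Ioo_pos_prob
    {N : ℕ} (hN : 1 ≤ N) {Ω : Type*} [MeasurableSpace Ω] [StandardBorelSpace Ω]
    {P : Measure Ω} [IsProbabilityMeasure P]
    (M : InteractingRSP N Ω P)
    (Zinf : Ω → ℝ)
    (hZinf : ∀ j, ∀ᵐ ω ∂P, Tendsto (fun n => M.Z n ω j) atTop (𝓝 (Zinf ω)))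
    (h0 : P (⋂ j : Fin N, {ω | M.Z 0 ω j = 0}) + P (⋂ j : Fin N, {ω | M.Z 0 ω j = 1}) < 1) :
    0 < P {ω | Zinf ω ∈ Set.Ioo (0 : ℝ) 1} := by

  classical
  obtain ⟨v, hv0, hv1, hfix⟩ := exists_perron hN M.w M.w_nonneg M.w_colsum M.w_irred
  have mq : ∀ n, Measurable fun ω => ∑ j, v j * M.Z n ω j := fun n =>
    sum_meas fun j => ((measurable_pi_apply j).comp (measZ M n)).const_mul (v j)
  have hq01 : ∀ n ω, 0 ≤ (∑ j, v j * M.Z n ω j) ∧ (∑ j, v j * M.Z n ω j) ≤ 1 := by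
    intro n ω
    constructor
    · exact Finset.sum_nonneg fun j _ => mul_nonneg (hv0 j).le (Zmem M n ω j).1
    · calc ∑ j, v j * M.Z n ω j ≤ ∑ j, v j * 1 :=
          Finset.sum_le_sum fun j _ => mul_le_mul_of_nonneg_left (Zmem M n ω j).2 (hv0 j).le
        _ = 1 := by simp [hv1]
  have iqq : ∀ n, Integrable
      (fun ω => (∑ j, v j * M.Z n ω j) * (1 - ∑ j, v j * M.Z n ω j)) P := fun n =>
    bdd_integrable ((mq n).mul (measurable_const.sub (mq n))) 1 fun ω =>
      abs_selfcomp (hq01 n ω).1 (hq01 n ω).2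
  set V : ℕ → ℝ :=
    fun n => ∫ ω, (∑ j, v j * M.Z n ω j) * (1 - ∑ j, v j * M.Z n ω j) ∂P with hV
  have hVnonneg : ∀ n, 0 ≤ V n := fun n =>
    integral_nonneg fun ω => mul_nonneg (hq01 n ω).1 (by linarith [(hq01 n ω).2])
  have hstep : ∀ n, (1 - (M.r n)^2) * V n ≤ V (n+1) := fun n => stepV M v hv0 hv1 hfix n
  obtain ⟨hsum, hto⟩ := r_facts M.r M.γ M.c M.γ_gt M.c_pos M.r_nonneg M.r_lim
  obtain ⟨C, hCpos, hC⟩ := prod_lb M.r M.r_nonneg M.r_lt_one hsum hto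
  have hfac_pos : ∀ k, 0 < 1 - (M.r k)^2 := fun k => by
    nlinarith [M.r_nonneg k, M.r_lt_one k]
  have hVlb : ∀ n, (∏ k ∈ Finset.range n, (1 - (M.r k)^2)) * V 0 ≤ V n := by
    intro n
    induction n with
    | zero => simp
    | succ n ih =>
      rw [Finset.prod_range_succ]
      calc (∏ k ∈ Finset.range n, (1 - (M.r k)^2)) * (1 - (M.r n)^2) * V 0
          = (1 - (M.r n)^2) * ((∏ k ∈ Finset.range n, (1 - (M.r k)^2)) * V 0) := by ring
        _ ≤ (1 - (M.r n)^2) * V n := mul_le_mul_of_nonneg_left ih (hfac_pos n).le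
        _ ≤ V (n+1) := hstep n
  -- positivity of V 0
  have hV0pos : 0 < V 0 := by
    rcases lt_or_ge 0 (V 0) with h | h
    · exact h
    exfalso
    have hV00 : V 0 = 0 := le_antisymm h (hVnonneg 0)
    have hnn : (0 : Ω → ℝ) ≤ fun ω => (∑ j, v j * M.Z 0 ω j) * (1 - ∑ j, v j * M.Z 0 ω j) :=
      fun ω => mul_nonneg (hq01 0 ω).1 (by linarith [(hq01 0 ω).2])
    have hae := (integral_eq_zero_iff_of_nonneg hnn (iqq 0)).mp hV00
    have hsub : ∀ ω, (∑ j, v j * M.Z 0 ω j) * (1 - ∑ j, v j * M.Z 0 ω j) = 0 →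
        ω ∈ (⋂ j : Fin N, {ω | M.Z 0 ω j = 0}) ∪ (⋂ j : Fin N, {ω | M.Z 0 ω j = 1}) := by
      intro ω hω
      rcases mul_eq_zero.mp hω with h' | h'
      · left
        have hz := (Finset.sum_eq_zero_iff_of_nonneg
          (fun j _ => mul_nonneg (hv0 j).le (Zmem M 0 ω j).1)).mp h'
        refine Set.mem_iInter.mpr fun j => ?_
        have hj := hz j (Finset.mem_univ j)
        rcases mul_eq_zero.mp hj with h'' | h''
        · exact absurd h'' (hv0 j).ne'
        · exact h''
      · right
        have hsum0 : ∑ j, v j * (1 - M.Z 0 ω j) = 0 := by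
          have e : ∑ j, v j * (1 - M.Z 0 ω j) = (∑ j, v j) - ∑ j, v j * M.Z 0 ω j := by
            rw [← Finset.sum_sub_distrib]
            exact Finset.sum_congr rfl fun j _ => by ring
          rw [e, hv1]
          linarith
        have hz := (Finset.sum_eq_zero_iff_of_nonneg
          (fun j _ => mul_nonneg (hv0 j).le (by linarith [(Zmem M 0 ω j).2]))).mp hsum0
        refine Set.mem_iInter.mpr fun j => ?_
        have hj := hz j (Finset.mem_univ j)
        rcases mul_eq_zero.mp hj with h'' | h''
        · exact absurd h'' (hv0 j).ne'
        · show M.Z 0 ω j = 1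
          linarith [h'']
    have hABm : MeasurableSet ((⋂ j : Fin N, {ω | M.Z 0 ω j = 0})
        ∪ (⋂ j : Fin N, {ω | M.Z 0 ω j = 1})) := by
      refine MeasurableSet.union ?_ ?_ <;> refine MeasurableSet.iInter fun j => ?_
      · exact measurableSet_eq_fun ((measurable_pi_apply j).comp M.Z0_meas) measurable_const
      · exact measurableSet_eq_fun ((measurable_pi_apply j).comp M.Z0_meas) measurable_const
    have h1 : ∀ᵐ ω ∂P, ω ∈ (⋂ j : Fin N, {ω | M.Z 0 ω j = 0})
        ∪ (⋂ j : Fin N, {ω | M.Z 0 ω j = 1}) := by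
      filter_upwards [hae] with ω hω
      exact hsub ω hω
    have h2 : P ((⋂ j : Fin N, {ω | M.Z 0 ω j = 0})
        ∪ (⋂ j : Fin N, {ω | M.Z 0 ω j = 1})) = 1 := by
      refine (prob_compl_eq_zero_iff hABm).mp ?_
      have := ae_iff.mp h1
      exact this
    have h3 := measure_union_le (μ := P) (⋂ j : Fin N, {ω | M.Z 0 ω j = 0})
      (⋂ j : Fin N, {ω | M.Z 0 ω j = 1})
    rw [h2] at h3
    exact absurd h0 (not_lt.mpr h3)
  -- convergence of V to ∫ Zinf (1 - Zinf)
  have hqlim : ∀ ω, (∀ j, Tendsto (fun n => M.Z n ω j) atTop (𝓝 (Zinf ω))) →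
      Tendsto (fun n => ∑ j, v j * M.Z n ω j) atTop (𝓝 (Zinf ω)) := by
    intro ω hω
    have h := tendsto_finset_sum Finset.univ
      (fun j (_ : j ∈ Finset.univ) => (hω j).const_mul (v j))
    have e : ∑ j, v j * Zinf ω = Zinf ω := by rw [← Finset.sum_mul, hv1, one_mul]
    rwa [e] at h
  have haeconv : ∀ᵐ ω ∂P, Tendsto
      (fun n => (∑ j, v j * M.Z n ω j) * (1 - ∑ j, v j * M.Z n ω j)) atTop
      (𝓝 (Zinf ω * (1 - Zinf ω))) := by
    filter_upwards [ae_all_iff.mpr hZinf] with ω hω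
    exact (hqlim ω hω).mul (tendsto_const_nhds.sub (hqlim ω hω))
  have hL : Tendsto V atTop (𝓝 (∫ ω, Zinf ω * (1 - Zinf ω) ∂P)) := by
    refine tendsto_integral_of_dominated_convergence (fun _ => (1:ℝ))
      (fun n => ((mq n).mul (measurable_const.sub (mq n))).aestronglyMeasurable)
      (integrable_const 1) (fun n => Filter.Eventually.of_forall fun ω => ?_) haeconv
    rw [Real.norm_eq_abs]
    exact abs_selfcomp (hq01 n ω).1 (hq01 n ω).2
  have hLpos : 0 < ∫ ω, Zinf ω * (1 - Zinf ω) ∂P := by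
    have hlb : ∀ n, C * V 0 ≤ V n := fun n =>
      le_trans (mul_le_mul_of_nonneg_right (hC n) (hVnonneg 0)) (hVlb n)
    have hge := ge_of_tendsto hL (Filter.Eventually.of_forall hlb)
    have := mul_pos hCpos hV0pos
    linarith
  -- conclusion
  by_contra hP
  push_neg at hP
  have hPS : P {ω | Zinf ω ∈ Set.Ioo (0:ℝ) 1} = 0 := le_antisymm hP zero_le
  have hnm := measure_eq_zero_iff_ae_notMem.mp hPS
  have hbound : ∀ᵐ ω ∂P, 0 ≤ Zinf ω ∧ Zinf ω ≤ 1 := by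
    filter_upwards [ae_all_iff.mpr hZinf] with ω hω
    have hq := hqlim ω hω
    exact ⟨ge_of_tendsto' hq fun n => (hq01 n ω).1,
      le_of_tendsto' hq fun n => (hq01 n ω).2⟩
  have hzero : ∀ᵐ ω ∂P, Zinf ω * (1 - Zinf ω) = 0 := by
    filter_upwards [hnm, hbound] with ω h1 h2
    simp only [Set.mem_setOf_eq, Set.mem_Ioo, not_and_or, not_lt] at h1
    rcases h1 with h | h
    · have : Zinf ω = 0 := le_antisymm h h2.1
      rw [this]; ring
    · have : Zinf ω = 1 := le_antisymm h2.2 h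
      rw [this]; ring
  have hzero' : ∫ ω, Zinf ω * (1 - Zinf ω) ∂P = 0 := by
    have : (fun ω => Zinf ω * (1 - Zinf ω)) =ᵐ[P] fun _ => (0:ℝ) := hzero
    rw [integral_congr_ae this, integral_zero]
  linarith

end
end

section
/- (Generalized Kronecker lemma) Let {v_{n,k} : 1 ≤ k ≤ n} be a triangular array of nonzero complex numbers and (z_n)_n a sequence of complex numbers such that: lim_n v_{n,k} = 0 for each fixed k; lim_n v_{n,n} exists and is finite; ∑_{k=1}^n |v_{n,k} − v_{n,k−1}| = O(1) (uniformly bounded in n); and the series ∑_n z_n converges. Then lim_n ∑_{k=1}^n v_{n,k} z_k = 0. -/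
open Filter Topology

/-- Abel summation identity for partial sums over `Icc 1 n`. -/
private lemma abel_identity_aux (w z : ℕ → ℂ) (n : ℕ) :
    ∑ k ∈ Finset.Icc 1 n, w k * z k
      = w n * (∑ k ∈ Finset.Icc 1 n, z k)
        - ∑ k ∈ Finset.Icc 2 n, (w k - w (k - 1)) * (∑ j ∈ Finset.Icc 1 (k - 1), z j) := by
  induction n with
  | zero => simp
  | succ n ih =>
    rcases Nat.eq_zero_or_pos n with hn | hn
    · subst hn; simp
    · rw [Finset.sum_Icc_succ_top (show 1 ≤ n + 1 by omega) (fun k => w k * z k), ih,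
        Finset.sum_Icc_succ_top (show 1 ≤ n + 1 by omega) z,
        Finset.sum_Icc_succ_top (show 2 ≤ n + 1 by omega)]
      simp only [Nat.add_sub_cancel]
      ring

/-- Telescoping sum. -/
private lemma telescope_aux (w : ℕ → ℂ) (n : ℕ) (hn : 1 ≤ n) :
    ∑ k ∈ Finset.Icc 2 n, (w k - w (k - 1)) = w n - w 1 := by
  induction n with
  | zero => omega
  | succ n ih =>
    rcases Nat.eq_zero_or_pos n with h | h
    · subst h; simp
    · rw [Finset.sum_Icc_succ_top (show 2 ≤ n + 1 by omega), ih h]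
      simp only [Nat.add_sub_cancel]
      ring

/-- **Generalized Kronecker lemma** (Corollary `kronecker-complex`): if `{v_{n,k} : 1 ≤ k ≤ n}`
is a triangular array of nonzero complex numbers with `lim_n v_{n,k} = 0` for each fixed `k`,
`lim_n v_{n,n}` existing finite, rows of uniformly bounded total variation
`∑_{k=2}^n |v_{n,k} - v_{n,k-1}| = O(1)`, and if the series `∑_n z_n` converges, then
`lim_n ∑_{k=1}^n v_{n,k} z_k = 0`. -/
theorem generalized_kronecker_lemma
    (v : ℕ → ℕ → ℂ) (z : ℕ → ℂ)
    (hne : ∀ n k, 1 ≤ k → k ≤ n → v n k ≠ 0)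
    (hv_fixed : ∀ k, 1 ≤ k → Tendsto (fun n => v n k) atTop (𝓝 0))
    (hv_diag : ∃ L : ℂ, Tendsto (fun n => v n n) atTop (𝓝 L))
    (hv_var : ∃ C : ℝ, ∀ n, ∑ k ∈ Finset.Icc 2 n, ‖v n k - v n (k - 1)‖ ≤ C)
    (hz : ∃ S : ℂ, Tendsto (fun n => ∑ k ∈ Finset.Icc 1 n, z k) atTop (𝓝 S)) :
    Tendsto (fun n => ∑ k ∈ Finset.Icc 1 n, v n k * z k) atTop (𝓝 0) := by
  obtain ⟨S, hS⟩ := hz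
  obtain ⟨L, hL⟩ := hv_diag
  obtain ⟨C, hC⟩ := hv_var
  have hC' : ∀ n, ∑ k ∈ Finset.Icc 2 n, ‖v n k - v n (k - 1)‖ ≤ C := by
    intro n; exact hC n
  have hC0 : 0 ≤ C := le_trans (by simp) (hC 0)
  set s : ℕ → ℂ := fun n => ∑ k ∈ Finset.Icc 1 n, z k with hs
  set r : ℕ → ℂ := fun n => S - s n with hrdef
  have hr : Tendsto r atTop (𝓝 0) := by
    have := Tendsto.sub (tendsto_const_nhds : Tendsto (fun _ : ℕ => S) atTop (𝓝 S)) hS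
    simpa using this
  -- the hard term
  have hg : Tendsto (fun n => ∑ k ∈ Finset.Icc 2 n, (v n k - v n (k - 1)) * r (k - 1))
      atTop (𝓝 0) := by
    rw [Metric.tendsto_atTop]
    intro ε hε
    set ε1 : ℝ := ε / (2 * (C + 1)) with hε1
    have hε1pos : 0 < ε1 := by positivity
    obtain ⟨K, hK⟩ := Metric.tendsto_atTop.mp hr ε1 hε1pos
    have hF : Tendsto (fun n => ∑ k ∈ Finset.Icc 2 (K + 1), (v n k - v n (k - 1)) * r (k - 1))
        atTop (𝓝 0) := by
      have hterm : ∀ k ∈ Finset.Icc 2 (K + 1),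
          Tendsto (fun n => (v n k - v n (k - 1)) * r (k - 1)) atTop (𝓝 0) := by
        intro k hk
        rw [Finset.mem_Icc] at hk
        have h1 := hv_fixed k (by omega)
        have h2 := hv_fixed (k - 1) (by omega)
        simpa using (h1.sub h2).mul_const (r (k - 1))
      have := tendsto_finset_sum (Finset.Icc 2 (K + 1)) hterm
      simpa using this
    obtain ⟨N0, hN0⟩ := Metric.tendsto_atTop.mp hF (ε / 2) (by positivity)
    refine ⟨max N0 (K + 1), fun n hn => ?_⟩
    have hn1 : N0 ≤ n := le_trans (le_max_left _ _) hn
    have hn2 : K + 1 ≤ n := le_trans (le_max_right _ _) hn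
    rw [dist_zero_right]
    have hsplit :
        (∑ k ∈ Finset.Icc 2 (K + 1), (v n k - v n (k - 1)) * r (k - 1))
          + ∑ k ∈ Finset.Ico (K + 2) (n + 1), (v n k - v n (k - 1)) * r (k - 1)
        = ∑ k ∈ Finset.Icc 2 n, (v n k - v n (k - 1)) * r (k - 1) := by
      rw [← Finset.Ico_add_one_right_eq_Icc (a := 2) (b := K + 1), ← Finset.Ico_add_one_right_eq_Icc (a := 2) (b := n)]
      exact Finset.sum_Ico_consecutive _ (by omega) (by omega)
    have htail : ‖∑ k ∈ Finset.Ico (K + 2) (n + 1), (v n k - v n (k - 1)) * r (k - 1)‖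
        ≤ C * ε1 := by
      calc ‖∑ k ∈ Finset.Ico (K + 2) (n + 1), (v n k - v n (k - 1)) * r (k - 1)‖
          ≤ ∑ k ∈ Finset.Ico (K + 2) (n + 1), ‖(v n k - v n (k - 1)) * r (k - 1)‖ :=
            norm_sum_le _ _
        _ ≤ ∑ k ∈ Finset.Ico (K + 2) (n + 1), ‖v n k - v n (k - 1)‖ * ε1 := by
            refine Finset.sum_le_sum fun k hk => ?_
            rw [Finset.mem_Ico] at hk
            rw [norm_mul]
            refine mul_le_mul_of_nonneg_left ?_ (norm_nonneg _)
            have := hK (k - 1) (by omega)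
            rw [dist_zero_right] at this
            exact this.le
        _ = (∑ k ∈ Finset.Ico (K + 2) (n + 1), ‖v n k - v n (k - 1)‖) * ε1 := by
            rw [Finset.sum_mul]
        _ ≤ C * ε1 := by
            refine mul_le_mul_of_nonneg_right ?_ hε1pos.le
            refine le_trans (Finset.sum_le_sum_of_subset_of_nonneg ?_ ?_) (hC' n)
            · intro k hk
              rw [Finset.mem_Ico] at hk
              rw [Finset.mem_Icc]
              omega
            · intro k _ _; exact norm_nonneg _
    have hCε : C * ε1 ≤ ε / 2 := by
      have h1 : C * ε1 ≤ (C + 1) * ε1 :=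
        mul_le_mul_of_nonneg_right (by linarith) hε1pos.le
      have h2 : (C + 1) * ε1 = ε / 2 := by
        rw [hε1]
        field_simp
      linarith
    have hF' : ‖∑ k ∈ Finset.Icc 2 (K + 1), (v n k - v n (k - 1)) * r (k - 1)‖ < ε / 2 := by
      have := hN0 n hn1
      rwa [dist_zero_right] at this
    calc ‖∑ k ∈ Finset.Icc 2 n, (v n k - v n (k - 1)) * r (k - 1)‖
        = ‖(∑ k ∈ Finset.Icc 2 (K + 1), (v n k - v n (k - 1)) * r (k - 1))
            + ∑ k ∈ Finset.Ico (K + 2) (n + 1), (v n k - v n (k - 1)) * r (k - 1)‖ := by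
          rw [hsplit]
      _ ≤ ‖∑ k ∈ Finset.Icc 2 (K + 1), (v n k - v n (k - 1)) * r (k - 1)‖
            + ‖∑ k ∈ Finset.Ico (K + 2) (n + 1), (v n k - v n (k - 1)) * r (k - 1)‖ :=
          norm_add_le _ _
      _ < ε / 2 + ε / 2 := by
          have := lt_of_le_of_lt (le_of_eq rfl) (lt_of_le_of_lt (le_refl _) (by linarith [htail, hCε] : ‖∑ k ∈ Finset.Ico (K + 2) (n + 1), (v n k - v n (k - 1)) * r (k - 1)‖ < ε / 2 + 1))
          linarith [htail, hCε, hF']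
      _ = ε := by ring
  have h1 : Tendsto (fun n => S * v n 1) atTop (𝓝 0) := by
    simpa using tendsto_const_nhds.mul (hv_fixed 1 le_rfl)
  have h2 : Tendsto (fun n => v n n * r n) atTop (𝓝 0) := by
    simpa using hL.mul hr
  have hsum : Tendsto (fun n => S * v n 1 - v n n * r n
      + ∑ k ∈ Finset.Icc 2 n, (v n k - v n (k - 1)) * r (k - 1)) atTop (𝓝 0) := by
    simpa using (h1.sub h2).add hg
  refine hsum.congr' ?_
  filter_upwards [eventually_ge_atTop 1] with n hn
  have habel := abel_identity_aux (v n) z n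
  have htel := telescope_aux (v n) n hn
  have e1 : ∑ k ∈ Finset.Icc 2 n, (v n k - v n (k - 1)) * r (k - 1)
      = (v n n - v n 1) * S - ∑ k ∈ Finset.Icc 2 n, (v n k - v n (k - 1)) * s (k - 1) := by
    rw [← htel, Finset.sum_mul, ← Finset.sum_sub_distrib]
    refine Finset.sum_congr rfl fun k _ => ?_
    simp only [hrdef]
    ring
  rw [e1, habel]
  simp only [hrdef, hs]
  ring
end

section
/- Let c > 0, let (r_n) satisfy 0 ≤ r_n < 1 and n·r_n = c + O(n^{-1}), and let x = a_x + i b_x, y = a_y + i b_y be complex numbers with a_x, a_y > 0 and c(a_x + a_y) > 1. With p_n and F_{k+1,n} as in the context, the following limits hold: (1) lim_n n·∑_{k=m_0}^{n−1} r_k² F_{k+1,n}(x)F_{k+1,n}(y) = c²/(c(x+y)−1); (2) lim_n n·∑_{k=m_0}^{n−1} r_k² ln(n/k) F_{k+1,n}(x)F_{k+1,n}(y) = c²/(c(x+y)−1)²; (3) lim_n n·∑_{k=m_0}^{n−1} r_k² ln²(n/k) F_{k+1,n}(x)F_{k+1,n}(y) = 2c²/(c(x+y)−1)³. -/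
open Filter Topology

section AuxLemmas

lemma aux_decay (v : ℕ → ℝ) (hv : ∀ n, 0 ≤ v n) {δ : ℝ} (hδ : 0 < δ) (e : ℕ → ℝ)
    (he : Tendsto (fun n : ℕ => (n : ℝ) * e n) atTop (𝓝 0))
    (hrec : ∀ᶠ n : ℕ in atTop, v (n + 1) ≤ (1 - δ / n) * v n + e n) :
    Tendsto v atTop (𝓝 0) := by
  rw [Metric.tendsto_atTop]
  intro η hη
  set η' : ℝ := η / 2 with hη'def
  have hη' : 0 < η' := by positivity
  have hev : ∀ᶠ n : ℕ in atTop, v (n + 1) ≤ (1 - δ / n) * v n + e n ∧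
      e n ≤ δ * η' / 2 * (1 / n) ∧ δ / n ≤ 1 ∧ 1 ≤ (n : ℝ) := by
    have h1 : ∀ᶠ n : ℕ in atTop, e n ≤ δ * η' / 2 * (1 / n) := by
      obtain ⟨N, hN⟩ := (Metric.tendsto_atTop.mp he (δ * η' / 2) (by positivity))
      filter_upwards [eventually_ge_atTop (max N 1)] with n hn
      have hn1 : 1 ≤ n := le_trans (le_max_right _ _) hn
      have hnN : N ≤ n := le_trans (le_max_left _ _) hn
      have hd := hN n hnN
      rw [Real.dist_eq, sub_zero] at hd
      have hnn : (0:ℝ) < n := by exact_mod_cast hn1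
      have h2 : (n:ℝ) * e n ≤ δ * η' / 2 := le_trans (le_abs_self _) hd.le
      have h3 : ((n:ℝ) * e n) / n ≤ (δ * η' / 2) / n := by gcongr
      calc e n = ((n:ℝ) * e n) / n := by field_simp
        _ ≤ (δ * η' / 2) / n := h3
        _ = δ * η' / 2 * (1 / n) := by ring
    have h2 : ∀ᶠ n : ℕ in atTop, δ / n ≤ 1 := by
      filter_upwards [eventually_ge_atTop (⌈δ⌉₊), eventually_ge_atTop 1] with n hn hn1
      have hδn : δ ≤ n := le_trans (Nat.le_ceil δ) (by exact_mod_cast hn)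
      have hnn : (0:ℝ) < n := by exact_mod_cast hn1
      rw [div_le_one hnn]; exact hδn
    have h3 : ∀ᶠ n : ℕ in atTop, 1 ≤ (n:ℝ) := by
      filter_upwards [eventually_ge_atTop 1] with n hn; exact_mod_cast hn
    filter_upwards [hrec, h1, h2, h3] with n a b c d; exact ⟨a, b, c, d⟩
  obtain ⟨N, hN⟩ := eventually_atTop.mp hev
  have hN1 : (1:ℝ) ≤ N := (hN N le_rfl).2.2.2
  have hstep1 : ∃ M, N ≤ M ∧ v M ≤ η' := by
    by_contra hcon
    push_neg at hcon
    have hind : ∀ k : ℕ, v (N + k) ≤ v N - (δ * η' / 2) * ∑ j ∈ Finset.range k, (1 : ℝ) / ((N:ℝ) + j) := by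
      intro k
      induction k with
      | zero => simp
      | succ k ih =>
        have hNk : N ≤ N + k := Nat.le_add_right _ _
        obtain ⟨hr, hb, hd1, hge1⟩ := hN (N + k) hNk
        have hvk : η' < v (N + k) := hcon _ hNk
        push_cast at hr hb hd1 hge1
        have hnn : (0:ℝ) < (N:ℝ) + k := by linarith
        have ht : 0 < δ / ((N:ℝ) + k) := div_pos hδ hnn
        have h2 : (δ / ((N:ℝ) + k)) * η' ≤ (δ / ((N:ℝ) + k)) * v (N + k) :=
          mul_le_mul_of_nonneg_left hvk.le ht.le
        have he1 : δ * η' / 2 * (1 / ((N:ℝ) + k)) = (δ / ((N:ℝ) + k)) * η' / 2 := by ring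
        have he2 : (1 - δ / ((N:ℝ) + k)) * v (N + k)
            = v (N + k) - (δ / ((N:ℝ) + k)) * v (N + k) := by ring
        rw [he2] at hr
        have hkey : v (N + (k + 1)) ≤ v (N + k) - (δ * η' / 2) * (1 / ((N:ℝ) + k)) := by
          have : N + (k + 1) = (N + k) + 1 := by ring
          rw [this]
          linarith
        rw [Finset.sum_range_succ]
        push_cast
        linarith
    have hH := Real.tendsto_sum_range_one_div_nat_succ_atTop
    obtain ⟨k, hk⟩ := (tendsto_atTop.mp hH (((N:ℝ) + 1) * (2 * v N / (δ * η') + 1))).exists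
    have hlow : (∑ j ∈ Finset.range k, (1 : ℝ) / ((j:ℝ) + 1)) / ((N:ℝ) + 1)
        ≤ ∑ j ∈ Finset.range k, (1 : ℝ) / ((N:ℝ) + j) := by
      rw [Finset.sum_div]
      apply Finset.sum_le_sum
      intro j _
      rw [div_div]
      have hj0 : (0:ℝ) ≤ j := Nat.cast_nonneg j
      have h01 : (0:ℝ) < (N:ℝ) + j := by linarith
      have h02 : (N:ℝ) + j ≤ ((j:ℝ) + 1) * ((N:ℝ) + 1) := by nlinarith
      exact one_div_le_one_div_of_le h01 h02
    have hub : (δ * η' / 2) * ∑ j ∈ Finset.range k, (1 : ℝ) / ((N:ℝ) + j) ≤ v N := by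
      have := hind k
      linarith [hv (N + k)]
    have hpos : (0:ℝ) < (N:ℝ) + 1 := by linarith
    have hS : 2 * v N / (δ * η') + 1 ≤ ∑ j ∈ Finset.range k, (1 : ℝ) / ((N:ℝ) + j) := by
      have h4 : (((N:ℝ) + 1) * (2 * v N / (δ * η') + 1)) / ((N:ℝ) + 1)
          ≤ (∑ j ∈ Finset.range k, (1 : ℝ) / ((j:ℝ) + 1)) / ((N:ℝ) + 1) := by gcongr
      have h5 : (((N:ℝ) + 1) * (2 * v N / (δ * η') + 1)) / ((N:ℝ) + 1)
          = 2 * v N / (δ * η') + 1 := by field_simp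
      linarith
    have hS2 : (δ * η' / 2) * (2 * v N / (δ * η') + 1) ≤ v N :=
      le_trans (mul_le_mul_of_nonneg_left hS (by positivity)) hub
    have heq : (δ * η' / 2) * (2 * v N / (δ * η') + 1) = v N + δ * η' / 2 := by
      field_simp
    rw [heq] at hS2
    have : 0 < δ * η' / 2 := by positivity
    linarith
  obtain ⟨M, hNM, hM⟩ := hstep1
  have hstay : ∀ n, M ≤ n → v n ≤ η' := by
    intro n hn
    induction n, hn using Nat.le_induction with
    | base => exact hM
    | succ n hn ih =>
      obtain ⟨hr, hb, hd1, hge1⟩ := hN n (le_trans hNM hn)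
      have hnn : (0:ℝ) < (n:ℝ) := lt_of_lt_of_le one_pos hge1
      have h1 : (1 - δ / n) * v n ≤ (1 - δ / n) * η' :=
        mul_le_mul_of_nonneg_left ih (sub_nonneg.mpr hd1)
      have h2 : 0 ≤ (δ / (n:ℝ)) * η' := by positivity
      have he1 : δ * η' / 2 * (1 / (n:ℝ)) = (δ / (n:ℝ)) * η' / 2 := by ring
      have he2 : (1 - δ / (n:ℝ)) * η' = η' - (δ / (n:ℝ)) * η' := by ring
      linarith
  refine ⟨M, fun n hn => ?_⟩
  rw [Real.dist_eq, sub_zero, abs_of_nonneg (hv n)]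
  exact lt_of_le_of_lt (hstay n hn) (by rw [hη'def]; linarith)

/-- `f n → 0` if `n * f n` converges. -/
lemma small_of_nmul (f : ℕ → ℂ) (l : ℂ)
    (h : Tendsto (fun n : ℕ => (n : ℂ) * f n) atTop (𝓝 l)) :
    Tendsto f atTop (𝓝 0) := by
  have hinv : Tendsto (fun n : ℕ => ((n : ℂ))⁻¹) atTop (𝓝 0) := by
    have hr : Tendsto (fun n : ℕ => ((n : ℝ))⁻¹) atTop (𝓝 0) :=
      tendsto_inv_atTop_zero.comp tendsto_natCast_atTop_atTop
    have h0 := (Complex.continuous_ofReal.tendsto 0).comp hr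
    rw [Complex.ofReal_zero] at h0
    apply h0.congr
    intro n
    simp [Function.comp]
  have h2 := h.mul hinv
  rw [mul_zero] at h2
  apply h2.congr'
  filter_upwards [eventually_ge_atTop 1] with n hn
  have hn0 : ((n : ℂ)) ≠ 0 := Nat.cast_ne_zero.mpr (Nat.one_le_iff_ne_zero.mp hn)
  field_simp

lemma rec_zero (w a ε : ℕ → ℂ) {α : ℂ} (hα : α.re < 0)
    (ha : Tendsto (fun n : ℕ => (n : ℂ) * a n) atTop (𝓝 α))
    (hε : Tendsto (fun n : ℕ => (n : ℂ) * ε n) atTop (𝓝 0))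
    (hw : ∀ᶠ n : ℕ in atTop, w (n + 1) = (1 + a n) * w n + ε n) :
    Tendsto w atTop (𝓝 0) := by
  set δ : ℝ := -α.re / 2 with hδdef
  have hδ : 0 < δ := by simp [hδdef]; linarith
  have ha0 : Tendsto a atTop (𝓝 0) := small_of_nmul a α ha
  -- eventually ‖1 + a n‖ ≤ 1 - δ / n
  have hkey : ∀ᶠ n : ℕ in atTop, ‖1 + a n‖ ≤ 1 - δ / n := by
    have hq : Tendsto (fun n : ℕ => 2 * ((n : ℂ) * a n).re + ‖(n : ℂ) * a n‖ * ‖a n‖ + 2 * δ)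
        atTop (𝓝 (α.re)) := by
      have h1 : Tendsto (fun n : ℕ => ((n : ℂ) * a n).re) atTop (𝓝 α.re) :=
        (Complex.continuous_re.tendsto α).comp ha
      have h2 := (ha.norm).mul (ha0.norm)
      rw [norm_zero, mul_zero] at h2
      have h3 := ((h1.const_mul 2).add h2).add_const (2 * δ)
      rw [add_zero] at h3
      convert h3 using 2
      rw [hδdef]; ring
    have hqev : ∀ᶠ n : ℕ in atTop,
        2 * ((n : ℂ) * a n).re + ‖(n : ℂ) * a n‖ * ‖a n‖ + 2 * δ ≤ 0 :=
      hq.eventually_le_const hα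
    have hδn : ∀ᶠ n : ℕ in atTop, δ / n ≤ 1 := by
      filter_upwards [eventually_ge_atTop (⌈δ⌉₊ + 1)] with n hn
      have h1 : (1:ℕ) ≤ n := le_trans (Nat.le_add_left _ _) hn
      have hδn' : δ ≤ n := le_trans (Nat.le_ceil δ) (by exact_mod_cast le_trans (Nat.le_succ _) hn)
      have hnn : (0:ℝ) < n := by exact_mod_cast h1
      rw [div_le_one hnn]; exact hδn'
    filter_upwards [hqev, hδn, eventually_ge_atTop 1] with n hqn hδ1 hn1
    have hnn : (0:ℝ) < (n:ℝ) := by exact_mod_cast hn1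
    have hrhs : 0 ≤ 1 - δ / n := by linarith
    -- compare squares
    have hsq : ‖1 + a n‖ ^ 2 ≤ (1 - δ / n) ^ 2 := by
      have hnorm : ‖1 + a n‖ ^ 2 = 1 + 2 * (a n).re + ‖a n‖ ^ 2 := by
        rw [Complex.sq_norm, Complex.sq_norm,
          Complex.normSq_apply, Complex.normSq_apply]
        simp [Complex.add_re, Complex.add_im]
        ring
      have hre : ((n : ℂ) * a n).re = (n : ℝ) * (a n).re := by
        simp [Complex.mul_re]
      have hno : ‖(n : ℂ) * a n‖ = (n : ℝ) * ‖a n‖ := by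
        rw [norm_mul, Complex.norm_natCast]
      rw [hre, hno] at hqn
      have h5 : (n : ℝ) * (2 * (a n).re + ‖a n‖ ^ 2 + 2 * (δ / n)) ≤ (n : ℝ) * 0 := by
        have heq : (n : ℝ) * (2 * (a n).re + ‖a n‖ ^ 2 + 2 * (δ / n))
            = 2 * ((n : ℝ) * (a n).re) + (n : ℝ) * ‖a n‖ * ‖a n‖ + 2 * δ := by
          field_simp
        rw [heq, mul_zero]
        exact hqn
      have key : 2 * (a n).re + ‖a n‖ ^ 2 + 2 * (δ / n) ≤ 0 := by
        have := le_of_mul_le_mul_left h5 hnn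
        linarith
      rw [hnorm]
      nlinarith [key, sq_nonneg (δ / (n : ℝ))]
    calc ‖1 + a n‖ = Real.sqrt (‖1 + a n‖ ^ 2) := by rw [Real.sqrt_sq (norm_nonneg _)]
      _ ≤ Real.sqrt ((1 - δ / n) ^ 2) := Real.sqrt_le_sqrt hsq
      _ = 1 - δ / n := Real.sqrt_sq hrhs
  -- apply aux_decay to v n = ‖w n‖
  have hrec : ∀ᶠ n : ℕ in atTop, ‖w (n + 1)‖ ≤ (1 - δ / n) * ‖w n‖ + ‖ε n‖ := by
    filter_upwards [hw, hkey] with n h1 h2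
    rw [h1]
    calc ‖(1 + a n) * w n + ε n‖ ≤ ‖(1 + a n) * w n‖ + ‖ε n‖ := norm_add_le _ _
      _ = ‖1 + a n‖ * ‖w n‖ + ‖ε n‖ := by rw [norm_mul]
      _ ≤ (1 - δ / n) * ‖w n‖ + ‖ε n‖ := by
          exact add_le_add_left (mul_le_mul_of_nonneg_right h2 (norm_nonneg _)) _
  have henorm : Tendsto (fun n : ℕ => (n : ℝ) * ‖ε n‖) atTop (𝓝 0) := by
    have := hε.norm
    rw [norm_zero] at this
    apply this.congr
    intro n
    rw [norm_mul, Complex.norm_natCast]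
  have := aux_decay (fun n => ‖w n‖) (fun n => norm_nonneg _) hδ (fun n => ‖ε n‖) henorm hrec
  exact tendsto_zero_iff_norm_tendsto_zero.mpr this

lemma rec_lim (z a b : ℕ → ℂ) {α β : ℂ} (hα : α.re < 0)
    (ha : Tendsto (fun n : ℕ => (n : ℂ) * a n) atTop (𝓝 α))
    (hb : Tendsto (fun n : ℕ => (n : ℂ) * b n) atTop (𝓝 β))
    (hz : ∀ᶠ n : ℕ in atTop, z (n + 1) = (1 + a n) * z n + b n) :
    Tendsto z atTop (𝓝 (-β / α)) := by
  have hα0 : α ≠ 0 := fun h => by rw [h] at hα; simp at hα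
  set L : ℂ := -β / α with hL
  have hε : Tendsto (fun n : ℕ => (n : ℂ) * (a n * L + b n)) atTop (𝓝 0) := by
    have h1 : Tendsto (fun n : ℕ => ((n : ℂ) * a n) * L + (n : ℂ) * b n) atTop
        (𝓝 (α * L + β)) := (ha.mul_const L).add hb
    have h2 : α * L + β = 0 := by
      rw [hL]; field_simp; ring
    rw [h2] at h1
    apply h1.congr
    intro n; ring
  have hw : ∀ᶠ n : ℕ in atTop, (z (n+1) - L) = (1 + a n) * (z n - L) + (a n * L + b n) := by
    filter_upwards [hz] with n h
    rw [h]; ring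
  have := rec_zero (fun n => z n - L) a (fun n => a n * L + b n) hα ha hε hw
  have h2 := this.add (tendsto_const_nhds (x := L))
  rw [zero_add] at h2
  apply h2.congr
  intro n; simp

end AuxLemmas

set_option maxHeartbeats 2000000

noncomputable section

/-- `p_n(x) = ∏_{m=m₀}^n (1 - x r_m)` (so that `p_{m₀-1}(x) = 1`, the empty product).
The quotient `p_n(x)/p_k(x)` is the paper's `F_{k+1,n}(x)`. -/
def pprod (r : ℕ → ℝ) (m0 : ℕ) (x : ℂ) (n : ℕ) : ℂ :=
  ∏ m ∈ Finset.Icc m0 n, (1 - x * (r m : ℂ))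

/-- **Lemma `lemma-tecnico_2` (i), case `c(a_x + a_y) > 1`**: under `n r_n = c + O(n⁻¹)`,
(1) `n ∑_{k=m₀}^{n-1} r_k² F_{k+1,n}(x)F_{k+1,n}(y) → c²/(c(x+y)-1)`,
(2) `n ∑_{k=m₀}^{n-1} r_k² ln(n/k) F_{k+1,n}(x)F_{k+1,n}(y) → c²/(c(x+y)-1)²`,
(3) `n ∑_{k=m₀}^{n-1} r_k² ln²(n/k) F_{k+1,n}(x)F_{k+1,n}(y) → 2c²/(c(x+y)-1)³`. -/
theorem product_sum_limits_supercritical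
    (c : ℝ) (hc : 0 < c) (r : ℕ → ℝ) (hr0 : ∀ n, 0 ≤ r n) (hr1 : ∀ n, r n < 1)
    (hrO : (fun n : ℕ => (n : ℝ) * r n - c) =O[atTop] fun n : ℕ => (n : ℝ)⁻¹)
    (x y : ℂ) (hx : 0 < x.re) (hy : 0 < y.re)
    (hsup : 1 < c * (x.re + y.re))
    (m0 : ℕ) (hm0 : 2 ≤ m0) (hm : ∀ m, m0 ≤ m → max x.re y.re * r m < 1) :
    Tendsto
      (fun n : ℕ => (n : ℂ) *
        ∑ k ∈ Finset.Ico m0 n, ((r k : ℂ)) ^ 2 *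
          (pprod r m0 x n / pprod r m0 x k) * (pprod r m0 y n / pprod r m0 y k))
      atTop (𝓝 ((c : ℂ) ^ 2 / ((c : ℂ) * (x + y) - 1))) ∧
    Tendsto
      (fun n : ℕ => (n : ℂ) *
        ∑ k ∈ Finset.Ico m0 n, ((r k : ℂ)) ^ 2 * (Real.log ((n : ℝ) / k) : ℂ) *
          (pprod r m0 x n / pprod r m0 x k) * (pprod r m0 y n / pprod r m0 y k))
      atTop (𝓝 ((c : ℂ) ^ 2 / ((c : ℂ) * (x + y) - 1) ^ 2)) ∧
    Tendsto
      (fun n : ℕ => (n : ℂ) *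
        ∑ k ∈ Finset.Ico m0 n, ((r k : ℂ)) ^ 2 * (Real.log ((n : ℝ) / k) : ℂ) ^ 2 *
          (pprod r m0 x n / pprod r m0 x k) * (pprod r m0 y n / pprod r m0 y k))
      atTop (𝓝 (2 * (c : ℂ) ^ 2 / ((c : ℂ) * (x + y) - 1) ^ 3)) := by
  -- nonvanishing of the partial products
  have hfac : ∀ (z : ℂ), z.re ≤ max x.re y.re → ∀ m, m0 ≤ m → (1 - z * (r m : ℂ)) ≠ 0 := by
    intro z hz m hmm
    have h1 : z.re * r m < 1 :=
      lt_of_le_of_lt (mul_le_mul_of_nonneg_right hz (hr0 m)) (hm m hmm)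
    have hre : (1 - z * (r m : ℂ)).re = 1 - z.re * r m := by
      simp [Complex.sub_re, Complex.mul_re]
    have hpos : 0 < (1 - z * (r m : ℂ)).re := by rw [hre]; linarith
    intro h0
    rw [h0] at hpos
    simp at hpos
  have hPne : ∀ k, pprod r m0 x k ≠ 0 := by
    intro k
    unfold pprod
    exact Finset.prod_ne_zero_iff.mpr fun m hmI =>
      hfac x (le_max_left _ _) m (Finset.mem_Icc.mp hmI).1
  have hQne : ∀ k, pprod r m0 y k ≠ 0 := by
    intro k
    unfold pprod
    exact Finset.prod_ne_zero_iff.mpr fun m hmI =>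
      hfac y (le_max_right _ _) m (Finset.mem_Icc.mp hmI).1
  -- limits of r
  have hinvR : Tendsto (fun n : ℕ => ((n : ℝ))⁻¹) atTop (𝓝 0) :=
    tendsto_inv_atTop_zero.comp tendsto_natCast_atTop_atTop
  have hnr : Tendsto (fun n : ℕ => (n : ℝ) * r n) atTop (𝓝 c) := by
    have h1 := hrO.trans_tendsto hinvR
    have h2 := h1.add_const c
    rw [zero_add] at h2
    apply h2.congr
    intro n; ring
  have hrz : Tendsto r atTop (𝓝 0) := by
    have h1 := hnr.mul hinvR
    rw [mul_zero] at h1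
    apply h1.congr'
    filter_upwards [eventually_ge_atTop 1] with n hn
    have hn0 : ((n : ℝ)) ≠ 0 := Nat.cast_ne_zero.mpr (by omega)
    field_simp
  have hnrC : Tendsto (fun n : ℕ => (n : ℂ) * (r n : ℂ)) atTop (𝓝 ((c : ℝ) : ℂ)) := by
    have h1 := (Complex.continuous_ofReal.tendsto c).comp hnr
    apply h1.congr
    intro n; simp [Function.comp]
  have hrzC : Tendsto (fun n : ℕ => ((r n : ℝ) : ℂ)) atTop (𝓝 0) := by
    have h1 := (Complex.continuous_ofReal.tendsto 0).comp hrz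
    rw [Complex.ofReal_zero] at h1
    apply h1.congr
    intro n; simp [Function.comp]
  have hrz1C : Tendsto (fun n : ℕ => ((r (n + 1) : ℝ) : ℂ)) atTop (𝓝 0) :=
    hrzC.comp (tendsto_add_atTop_nat 1)
  have hnr1C : Tendsto (fun n : ℕ => (n : ℂ) * (r (n + 1) : ℂ)) atTop (𝓝 ((c : ℝ) : ℂ)) := by
    have hA := hnrC.comp (tendsto_add_atTop_nat 1)
    have h1 := hA.sub hrz1C
    rw [sub_zero] at h1
    apply h1.congr
    intro n
    simp only [Function.comp]
    push_cast
    ring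
  -- auxiliary sequences
  set u : ℕ → ℂ := fun n => (1 - x * (r (n + 1) : ℂ)) * (1 - y * (r (n + 1) : ℂ)) with hud
  set a : ℕ → ℂ := fun n => ((n : ℂ) + 1) / (n : ℂ) * u n - 1 with had
  set b0 : ℕ → ℂ := fun n => ((n : ℂ) + 1) * (r n : ℂ) ^ 2 * u n with hb0d
  set lam : ℕ → ℂ := fun n => ((Real.log (((n : ℝ) + 1) / (n : ℝ)) : ℝ) : ℂ) with hlamd
  have hu1 : Tendsto u atTop (𝓝 1) := by
    have h1 := (tendsto_const_nhds (x := (1:ℂ))).sub (hrz1C.const_mul x)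
    have h2 := (tendsto_const_nhds (x := (1:ℂ))).sub (hrz1C.const_mul y)
    have h3 := h1.mul h2
    have h4 : ((1:ℂ) - x * 0) * (1 - y * 0) = 1 := by ring
    rw [h4] at h3
    exact h3
  have hna : Tendsto (fun n : ℕ => (n : ℂ) * a n) atTop (𝓝 (1 - (c : ℂ) * (x + y))) := by
    have hA : Tendsto (fun n : ℕ => (n : ℂ) * (r (n+1) : ℂ) + (r (n+1) : ℂ)) atTop
        (𝓝 (((c:ℝ):ℂ) + 0)) := hnr1C.add hrz1C
    have hg : Tendsto (fun n : ℕ =>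
        1 - (x + y) * ((n : ℂ) * (r (n+1) : ℂ) + (r (n+1) : ℂ))
          + x * y * (((n : ℂ) * (r (n+1) : ℂ) + (r (n+1) : ℂ)) * (r (n+1) : ℂ))) atTop
        (𝓝 (1 - (x + y) * (((c:ℝ):ℂ) + 0) + x * y * ((((c:ℝ):ℂ) + 0) * 0))) :=
      ((tendsto_const_nhds (x := (1:ℂ))).sub (hA.const_mul (x + y))).add
        ((hA.mul hrz1C).const_mul (x * y))
    have heq : (1 : ℂ) - (x + y) * (((c:ℝ):ℂ) + 0) + x * y * ((((c:ℝ):ℂ) + 0) * 0)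
        = 1 - (c : ℂ) * (x + y) := by push_cast; ring
    rw [heq] at hg
    apply hg.congr'
    filter_upwards [eventually_ge_atTop 1] with n hn
    have hn0 : ((n : ℂ)) ≠ 0 := Nat.cast_ne_zero.mpr (by omega)
    simp only [had, hud]
    field_simp
    ring
  have hnb0 : Tendsto (fun n : ℕ => (n : ℂ) * b0 n) atTop (𝓝 ((c : ℂ) ^ 2)) := by
    have h1 := (hnrC.mul (hnrC.add hrzC)).mul hu1
    have heq : ((c:ℝ):ℂ) * (((c:ℝ):ℂ) + 0) * 1 = (c : ℂ) ^ 2 := by push_cast; ring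
    rw [heq] at h1
    apply h1.congr
    intro n
    simp only [hb0d]
    ring
  have hnlam : Tendsto (fun n : ℕ => (n : ℂ) * lam n) atTop (𝓝 1) := by
    have hR : Tendsto (fun n : ℕ => (n : ℝ) * Real.log (((n : ℝ) + 1) / (n : ℝ))) atTop (𝓝 1) := by
      have h0 := (Real.tendsto_mul_log_one_add_div_atTop 1).comp
        (tendsto_natCast_atTop_atTop (R := ℝ))
      apply h0.congr'
      filter_upwards [eventually_ge_atTop 1] with n hn
      have hn0 : ((n : ℝ)) ≠ 0 := Nat.cast_ne_zero.mpr (by omega)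
      simp only [Function.comp]
      congr 1
      field_simp
    have h1 := (Complex.continuous_ofReal.tendsto 1).comp hR
    rw [Complex.ofReal_one] at h1
    apply h1.congr
    intro n
    simp only [Function.comp, hlamd]
    push_cast
    ring
  have haz : Tendsto a atTop (𝓝 0) := small_of_nmul a _ hna
  have hb0z : Tendsto b0 atTop (𝓝 0) := small_of_nmul b0 _ hnb0
  have hlamz : Tendsto lam atTop (𝓝 0) := small_of_nmul lam _ hnlam
  have hsre : ((1 : ℂ) - (c : ℂ) * (x + y)).re < 0 := by
    simp [Complex.sub_re, Complex.mul_re, Complex.add_re, Complex.add_im]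
    linarith
  have hden : ((c : ℂ) * (x + y) - 1) ≠ 0 := by
    intro h
    have := congrArg Complex.re h
    simp [Complex.sub_re, Complex.mul_re, Complex.add_re, Complex.add_im] at this
    linarith
  -- the three sums
  set S0 : ℕ → ℂ := (fun n : ℕ => (n : ℂ) *
        ∑ k ∈ Finset.Ico m0 n, ((r k : ℂ)) ^ 2 *
          (pprod r m0 x n / pprod r m0 x k) * (pprod r m0 y n / pprod r m0 y k)) with hS0d
  set S1 : ℕ → ℂ := (fun n : ℕ => (n : ℂ) *
        ∑ k ∈ Finset.Ico m0 n, ((r k : ℂ)) ^ 2 * (Real.log ((n : ℝ) / k) : ℂ) *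
          (pprod r m0 x n / pprod r m0 x k) * (pprod r m0 y n / pprod r m0 y k)) with hS1d
  set S2 : ℕ → ℂ := (fun n : ℕ => (n : ℂ) *
        ∑ k ∈ Finset.Ico m0 n, ((r k : ℂ)) ^ 2 * (Real.log ((n : ℝ) / k) : ℂ) ^ 2 *
          (pprod r m0 x n / pprod r m0 x k) * (pprod r m0 y n / pprod r m0 y k)) with hS2d
  set b1 : ℕ → ℂ := fun n => lam n * ((1 + a n) * S0 n + b0 n) with hb1d
  set b2 : ℕ → ℂ := fun n => 2 * lam n * ((1 + a n) * S1 n)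
      + lam n ^ 2 * ((1 + a n) * S0 n + b0 n) with hb2d
  -- recurrence for S0
  have hrec0 : ∀ n, m0 ≤ n → S0 (n + 1) = (1 + a n) * S0 n + b0 n := by
    intro n hn
    have hn0 : ((n : ℂ)) ≠ 0 := Nat.cast_ne_zero.mpr (by omega)
    have hPs : pprod r m0 x (n + 1) = pprod r m0 x n * (1 - x * (r (n + 1) : ℂ)) :=
      Finset.prod_Icc_succ_top (by omega) _
    have hQs : pprod r m0 y (n + 1) = pprod r m0 y n * (1 - y * (r (n + 1) : ℂ)) :=
      Finset.prod_Icc_succ_top (by omega) _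
    simp only [hS0d]
    rw [Finset.sum_Ico_succ_top hn]
    have hterm : ∀ k ∈ Finset.Ico m0 n,
        ((r k : ℂ)) ^ 2 * (pprod r m0 x (n + 1) / pprod r m0 x k) *
          (pprod r m0 y (n + 1) / pprod r m0 y k)
        = u n * (((r k : ℂ)) ^ 2 * (pprod r m0 x n / pprod r m0 x k) *
            (pprod r m0 y n / pprod r m0 y k)) := by
      intro k _
      rw [hPs, hQs]
      simp only [hud]
      ring
    rw [Finset.sum_congr rfl hterm, ← Finset.mul_sum, hPs, hQs,
      mul_div_cancel_left₀ _ (hPne n), mul_div_cancel_left₀ _ (hQne n)]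
    simp only [had, hb0d, hud]
    generalize (∑ k ∈ Finset.Ico m0 n, ((r k : ℂ)) ^ 2 *
        (pprod r m0 x n / pprod r m0 x k) * (pprod r m0 y n / pprod r m0 y k)) = T0
    push_cast
    field_simp
    ring
  -- recurrence for S1
  have hrec1 : ∀ n, m0 ≤ n → S1 (n + 1) = (1 + a n) * S1 n + b1 n := by
    intro n hn
    have hn0 : ((n : ℂ)) ≠ 0 := Nat.cast_ne_zero.mpr (by omega)
    have hnR : ((n : ℝ)) ≠ 0 := Nat.cast_ne_zero.mpr (by omega)
    have hn1R : ((n + 1 : ℕ) : ℝ) ≠ 0 := Nat.cast_ne_zero.mpr (by omega)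
    have hPs : pprod r m0 x (n + 1) = pprod r m0 x n * (1 - x * (r (n + 1) : ℂ)) :=
      Finset.prod_Icc_succ_top (by omega) _
    have hQs : pprod r m0 y (n + 1) = pprod r m0 y n * (1 - y * (r (n + 1) : ℂ)) :=
      Finset.prod_Icc_succ_top (by omega) _
    have hlam2 : ((Real.log (((n + 1 : ℕ) : ℝ) / (n : ℝ)) : ℝ) : ℂ) = lam n := by
      simp only [hlamd]
      norm_num
    have hlogsplit : ∀ k ∈ Finset.Ico m0 n,
        ((Real.log (((n + 1 : ℕ) : ℝ) / (k : ℝ)) : ℝ) : ℂ)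
          = ((Real.log ((n : ℝ) / (k : ℝ)) : ℝ) : ℂ) + lam n := by
      intro k hk
      have hkm : m0 ≤ k := (Finset.mem_Ico.mp hk).1
      have hkR : ((k : ℝ)) ≠ 0 := Nat.cast_ne_zero.mpr (by omega)
      have h1 : Real.log (((n + 1 : ℕ) : ℝ) / (k : ℝ))
          = Real.log ((n : ℝ) / (k : ℝ)) + Real.log (((n : ℝ) + 1) / (n : ℝ)) := by
        rw [Real.log_div hn1R hkR, Real.log_div hnR hkR,
          Real.log_div (by positivity) hnR]
        push_cast
        ring
      rw [h1, Complex.ofReal_add]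
    simp only [hS1d]
    rw [Finset.sum_Ico_succ_top hn]
    have hterm : ∀ k ∈ Finset.Ico m0 n,
        ((r k : ℂ)) ^ 2 * ((Real.log (((n + 1 : ℕ) : ℝ) / (k : ℝ)) : ℝ) : ℂ) *
          (pprod r m0 x (n + 1) / pprod r m0 x k) * (pprod r m0 y (n + 1) / pprod r m0 y k)
        = u n * (((r k : ℂ)) ^ 2 * ((Real.log ((n : ℝ) / (k : ℝ)) : ℝ) : ℂ) *
            (pprod r m0 x n / pprod r m0 x k) * (pprod r m0 y n / pprod r m0 y k))
          + lam n * u n * (((r k : ℂ)) ^ 2 *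
            (pprod r m0 x n / pprod r m0 x k) * (pprod r m0 y n / pprod r m0 y k)) := by
      intro k hk
      rw [hPs, hQs, hlogsplit k hk]
      simp only [hud]
      ring
    rw [Finset.sum_congr rfl hterm, Finset.sum_add_distrib, ← Finset.mul_sum, ← Finset.mul_sum,
      hPs, hQs, mul_div_cancel_left₀ _ (hPne n), mul_div_cancel_left₀ _ (hQne n), hlam2]
    simp only [hb1d, hS0d, had, hb0d, hud]
    generalize (∑ k ∈ Finset.Ico m0 n, ((r k : ℂ)) ^ 2 * ((Real.log ((n : ℝ) / (k : ℝ)) : ℝ) : ℂ) *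
        (pprod r m0 x n / pprod r m0 x k) * (pprod r m0 y n / pprod r m0 y k)) = T1
    generalize (∑ k ∈ Finset.Ico m0 n, ((r k : ℂ)) ^ 2 *
        (pprod r m0 x n / pprod r m0 x k) * (pprod r m0 y n / pprod r m0 y k)) = T0
    push_cast
    field_simp
    ring
  -- recurrence for S2
  have hrec2 : ∀ n, m0 ≤ n → S2 (n + 1) = (1 + a n) * S2 n + b2 n := by
    intro n hn
    have hn0 : ((n : ℂ)) ≠ 0 := Nat.cast_ne_zero.mpr (by omega)
    have hnR : ((n : ℝ)) ≠ 0 := Nat.cast_ne_zero.mpr (by omega)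
    have hn1R : ((n + 1 : ℕ) : ℝ) ≠ 0 := Nat.cast_ne_zero.mpr (by omega)
    have hPs : pprod r m0 x (n + 1) = pprod r m0 x n * (1 - x * (r (n + 1) : ℂ)) :=
      Finset.prod_Icc_succ_top (by omega) _
    have hQs : pprod r m0 y (n + 1) = pprod r m0 y n * (1 - y * (r (n + 1) : ℂ)) :=
      Finset.prod_Icc_succ_top (by omega) _
    have hlam2 : ((Real.log (((n + 1 : ℕ) : ℝ) / (n : ℝ)) : ℝ) : ℂ) = lam n := by
      simp only [hlamd]
      norm_num
    have hlogsplit : ∀ k ∈ Finset.Ico m0 n,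
        ((Real.log (((n + 1 : ℕ) : ℝ) / (k : ℝ)) : ℝ) : ℂ)
          = ((Real.log ((n : ℝ) / (k : ℝ)) : ℝ) : ℂ) + lam n := by
      intro k hk
      have hkm : m0 ≤ k := (Finset.mem_Ico.mp hk).1
      have hkR : ((k : ℝ)) ≠ 0 := Nat.cast_ne_zero.mpr (by omega)
      have h1 : Real.log (((n + 1 : ℕ) : ℝ) / (k : ℝ))
          = Real.log ((n : ℝ) / (k : ℝ)) + Real.log (((n : ℝ) + 1) / (n : ℝ)) := by
        rw [Real.log_div hn1R hkR, Real.log_div hnR hkR,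
          Real.log_div (by positivity) hnR]
        push_cast
        ring
      rw [h1, Complex.ofReal_add]
    simp only [hS2d]
    rw [Finset.sum_Ico_succ_top hn]
    have hterm : ∀ k ∈ Finset.Ico m0 n,
        ((r k : ℂ)) ^ 2 * ((Real.log (((n + 1 : ℕ) : ℝ) / (k : ℝ)) : ℝ) : ℂ) ^ 2 *
          (pprod r m0 x (n + 1) / pprod r m0 x k) * (pprod r m0 y (n + 1) / pprod r m0 y k)
        = u n * (((r k : ℂ)) ^ 2 * ((Real.log ((n : ℝ) / (k : ℝ)) : ℝ) : ℂ) ^ 2 *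
            (pprod r m0 x n / pprod r m0 x k) * (pprod r m0 y n / pprod r m0 y k))
          + 2 * lam n * u n * (((r k : ℂ)) ^ 2 * ((Real.log ((n : ℝ) / (k : ℝ)) : ℝ) : ℂ) *
            (pprod r m0 x n / pprod r m0 x k) * (pprod r m0 y n / pprod r m0 y k))
          + lam n ^ 2 * u n * (((r k : ℂ)) ^ 2 *
            (pprod r m0 x n / pprod r m0 x k) * (pprod r m0 y n / pprod r m0 y k)) := by
      intro k hk
      rw [hPs, hQs, hlogsplit k hk]
      simp only [hud]
      ring
    rw [Finset.sum_congr rfl hterm, Finset.sum_add_distrib, Finset.sum_add_distrib,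
      ← Finset.mul_sum, ← Finset.mul_sum, ← Finset.mul_sum,
      hPs, hQs, mul_div_cancel_left₀ _ (hPne n), mul_div_cancel_left₀ _ (hQne n), hlam2]
    simp only [hb2d, hS1d, hS0d, had, hb0d, hud]
    generalize (∑ k ∈ Finset.Ico m0 n, ((r k : ℂ)) ^ 2 * ((Real.log ((n : ℝ) / (k : ℝ)) : ℝ) : ℂ) ^ 2 *
        (pprod r m0 x n / pprod r m0 x k) * (pprod r m0 y n / pprod r m0 y k)) = T2
    generalize (∑ k ∈ Finset.Ico m0 n, ((r k : ℂ)) ^ 2 * ((Real.log ((n : ℝ) / (k : ℝ)) : ℝ) : ℂ) *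
        (pprod r m0 x n / pprod r m0 x k) * (pprod r m0 y n / pprod r m0 y k)) = T1
    generalize (∑ k ∈ Finset.Ico m0 n, ((r k : ℂ)) ^ 2 *
        (pprod r m0 x n / pprod r m0 x k) * (pprod r m0 y n / pprod r m0 y k)) = T0
    push_cast
    field_simp
    ring
  -- first limit
  have hS0 : Tendsto S0 atTop (𝓝 ((c : ℂ) ^ 2 / ((c : ℂ) * (x + y) - 1))) := by
    have h := rec_lim S0 a b0 hsre hna hnb0 (eventually_atTop.mpr ⟨m0, hrec0⟩)
    have heq : -(c : ℂ) ^ 2 / (1 - (c : ℂ) * (x + y))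
        = (c : ℂ) ^ 2 / ((c : ℂ) * (x + y) - 1) := by
      rw [show (1 : ℂ) - (c : ℂ) * (x + y) = -((c : ℂ) * (x + y) - 1) by ring, neg_div_neg_eq]
    rwa [heq] at h
  -- second limit
  have hnb1 : Tendsto (fun n : ℕ => (n : ℂ) * b1 n) atTop
      (𝓝 ((c : ℂ) ^ 2 / ((c : ℂ) * (x + y) - 1))) := by
    have t1 := hnlam.mul ((((tendsto_const_nhds (x := (1:ℂ))).add haz).mul hS0).add hb0z)
    have heq : (1 : ℂ) * (((1 : ℂ) + 0) * ((c : ℂ) ^ 2 / ((c : ℂ) * (x + y) - 1)) + 0)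
        = (c : ℂ) ^ 2 / ((c : ℂ) * (x + y) - 1) := by ring
    rw [heq] at t1
    apply t1.congr
    intro n
    simp only [hb1d]
    ring
  have hS1 : Tendsto S1 atTop (𝓝 ((c : ℂ) ^ 2 / ((c : ℂ) * (x + y) - 1) ^ 2)) := by
    have h := rec_lim S1 a b1 hsre hna hnb1 (eventually_atTop.mpr ⟨m0, hrec1⟩)
    have heq : -((c : ℂ) ^ 2 / ((c : ℂ) * (x + y) - 1)) / (1 - (c : ℂ) * (x + y))
        = (c : ℂ) ^ 2 / ((c : ℂ) * (x + y) - 1) ^ 2 := by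
      rw [show (1 : ℂ) - (c : ℂ) * (x + y) = -((c : ℂ) * (x + y) - 1) by ring,
        neg_div_neg_eq, div_div, ← sq]
    rwa [heq] at h
  -- third limit
  have hnb2 : Tendsto (fun n : ℕ => (n : ℂ) * b2 n) atTop
      (𝓝 (2 * ((c : ℂ) ^ 2 / ((c : ℂ) * (x + y) - 1) ^ 2))) := by
    have t2a := (hnlam.mul (((tendsto_const_nhds (x := (1:ℂ))).add haz).mul hS1)).const_mul 2
    have t2b := (hnlam.mul hlamz).mul
      ((((tendsto_const_nhds (x := (1:ℂ))).add haz).mul hS0).add hb0z)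
    have t2 := t2a.add t2b
    have heq : 2 * ((1 : ℂ) * (((1 : ℂ) + 0) * ((c : ℂ) ^ 2 / ((c : ℂ) * (x + y) - 1) ^ 2)))
        + (1 : ℂ) * 0 * (((1 : ℂ) + 0) * ((c : ℂ) ^ 2 / ((c : ℂ) * (x + y) - 1)) + 0)
        = 2 * ((c : ℂ) ^ 2 / ((c : ℂ) * (x + y) - 1) ^ 2) := by ring
    rw [heq] at t2
    apply t2.congr
    intro n
    simp only [hb2d]
    ring
  have hS2 : Tendsto S2 atTop (𝓝 (2 * (c : ℂ) ^ 2 / ((c : ℂ) * (x + y) - 1) ^ 3)) := by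
    have h := rec_lim S2 a b2 hsre hna hnb2 (eventually_atTop.mpr ⟨m0, hrec2⟩)
    have heq : -(2 * ((c : ℂ) ^ 2 / ((c : ℂ) * (x + y) - 1) ^ 2)) / (1 - (c : ℂ) * (x + y))
        = 2 * (c : ℂ) ^ 2 / ((c : ℂ) * (x + y) - 1) ^ 3 := by
      rw [show (1 : ℂ) - (c : ℂ) * (x + y) = -((c : ℂ) * (x + y) - 1) by ring,
        neg_div_neg_eq, ← mul_div_assoc, div_div, ← pow_succ]
    rwa [heq] at h
  exact ⟨hS0, hS1, hS2⟩

end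
end

section
/- Let c > 0, let (r_n) satisfy 0 ≤ r_n < 1 and n·r_n = c + O(n^{-1}), and let x = a_x + i b_x, y = a_y + i b_y be complex with a_x, a_y > 0 and c(a_x + a_y) ≥ 1. For any u ≥ 1: if c(a_x+a_y) = 1 then ∑_{k=m_0}^{n−1} r_k^{2u} (|p_n(x)||p_n(y)|/(|p_k(x)||p_k(y)|))^u = O(ln(n)/n) for u = 1 and O(n^{-u}) for u > 1; if c(a_x+a_y) > 1 then for e ∈ {0,1,2}, ∑_{k=m_0}^{n−1} r_k^{2u} ln^{eu}(n/k) (|p_n(x)||p_n(y)|/(|p_k(x)||p_k(y)|))^u equals O(n^{-uc(a_x+a_y)} ln^{eu}(n)) when uc(a_x+a_y) < 2u−1, O(n^{-(2u−1)} ln^{eu+1}(n)) when uc(a_x+a_y) = 2u−1, and O(n^{-(2u−1)}) when uc(a_x+a_y) > 2u−1. -/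
open Filter Topology

noncomputable section

open Asymptotics

lemma aux_log_sum_lower (k : ℕ) (hk : 1 ≤ k) : ∀ n : ℕ, k ≤ n →
    Real.log ((n : ℝ) + 1) - Real.log ((k : ℝ) + 1) ≤ ∑ m ∈ Finset.Ioc k n, ((m : ℝ))⁻¹ := by
  intro n hkn
  induction n, hkn using Nat.le_induction with
  | base => simp
  | succ n hn ih =>
    rw [Finset.sum_Ioc_succ_top hn]
    have hpos : (0:ℝ) < (n:ℝ) + 1 := by positivity
    have h2 := Real.log_le_sub_one_of_pos (x := ((n:ℝ)+1+1)/((n:ℝ)+1)) (by positivity)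
    rw [Real.log_div (by positivity) (by positivity)] at h2
    have h3 : ((n:ℝ)+1+1)/((n:ℝ)+1) - 1 = ((n:ℝ)+1)⁻¹ := by field_simp; ring
    push_cast
    push_cast at ih
    rw [h3] at h2
    linarith

lemma aux_sum_inv_le (n : ℕ) (hn : 1 ≤ n) :
    ∑ m ∈ Finset.Ioc 1 n, ((m : ℝ))⁻¹ ≤ Real.log n := by
  induction n, hn using Nat.le_induction with
  | base => simp
  | succ n hn ih =>
    rw [Finset.sum_Ioc_succ_top hn]
    have hpos : (0:ℝ) < (n:ℝ) := by
      have : (1:ℝ) ≤ (n:ℝ) := by exact_mod_cast hn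
      linarith
    have h2 := Real.log_le_sub_one_of_pos (x := (n:ℝ)/((n:ℝ)+1)) (by positivity)
    rw [Real.log_div (by positivity) (by positivity)] at h2
    have h3 : (n:ℝ)/((n:ℝ)+1) - 1 = -(((n:ℝ)+1)⁻¹) := by field_simp; ring
    rw [h3] at h2
    push_cast
    linarith

lemma aux_one_le_log (n : ℕ) (hn : 3 ≤ n) : 1 ≤ Real.log n := by
  have hpos : (0:ℝ) < n := by positivity
  rw [Real.le_log_iff_exp_le hpos]
  have h3 : (3:ℝ) ≤ (n:ℝ) := by exact_mod_cast hn
  have := Real.exp_one_lt_d9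
  linarith

lemma aux_harmonic (n : ℕ) (hn : 3 ≤ n) :
    ∑ k ∈ Finset.Ico 1 n, ((k : ℝ))⁻¹ ≤ 2 * Real.log n := by
  have hsub : Finset.Ico 1 n ⊆ insert 1 (Finset.Ioc 1 n) := by
    intro k hk
    simp only [Finset.mem_Ico] at hk
    simp only [Finset.mem_insert, Finset.mem_Ioc]
    omega
  have h1 : ∑ k ∈ Finset.Ico 1 n, ((k:ℝ))⁻¹ ≤ ∑ k ∈ insert 1 (Finset.Ioc 1 n), ((k:ℝ))⁻¹ :=
    Finset.sum_le_sum_of_subset_of_nonneg hsub (fun i _ _ => by positivity)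
  rw [Finset.sum_insert (by simp)] at h1
  have h2 := aux_sum_inv_le n (by omega)
  have h3 := aux_one_le_log n hn
  simp only [Nat.cast_one, inv_one] at h1
  linarith

lemma aux_sum_sq_inv (k : ℕ) (hk : 1 ≤ k) (n : ℕ) :
    ∑ m ∈ Finset.Ioc k n, ((m : ℝ) * m)⁻¹ ≤ 1 := by
  rcases le_or_gt k n with h | h
  · have key : ∀ n : ℕ, k ≤ n → ∑ m ∈ Finset.Ioc k n, ((m:ℝ)*m)⁻¹ ≤ (k:ℝ)⁻¹ - (n:ℝ)⁻¹ := by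
      intro n hn
      induction n, hn using Nat.le_induction with
      | base => simp
      | succ n hn ih =>
        rw [Finset.sum_Ioc_succ_top hn]
        have hn0 : (0:ℝ) < n := by
          have : (1:ℝ) ≤ (n:ℝ) := by exact_mod_cast le_trans hk hn
          linarith
        have e1 : (n:ℝ)⁻¹ - ((n:ℝ)+1)⁻¹ = ((n:ℝ)*((n:ℝ)+1))⁻¹ := by
          field_simp
          ring
        have e2 : (((n:ℝ)+1)*((n:ℝ)+1))⁻¹ ≤ ((n:ℝ)*((n:ℝ)+1))⁻¹ := by
          apply inv_anti₀ (by positivity)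
          nlinarith
        push_cast
        push_cast at ih
        linarith [e2, e1]
    have h1 := key n h
    have hk0 : (k:ℝ)⁻¹ ≤ 1 := by
      have : (1:ℝ) ≤ (k:ℝ) := by exact_mod_cast hk
      simpa using inv_anti₀ one_pos this
    have hn0 : (0:ℝ) ≤ (n:ℝ)⁻¹ := by positivity
    linarith
  · rw [Finset.Ioc_eq_empty (by omega)]
    simp

lemma aux_sum_rpow_le (γ : ℝ) (hγ : -1 < γ) :
    ∃ C : ℝ, 0 < C ∧ ∀ n : ℕ, 1 ≤ n → ∑ k ∈ Finset.Ico 1 n, (k:ℝ) ^ γ ≤ C * (n:ℝ) ^ (γ + 1) := by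
  rcases le_or_gt 0 γ with h0 | h0
  · refine ⟨1, one_pos, fun n hn => ?_⟩
    have hn0 : (0:ℝ) < n := by positivity
    calc ∑ k ∈ Finset.Ico 1 n, (k:ℝ)^γ ≤ ∑ _k ∈ Finset.Ico 1 n, (n:ℝ)^γ := by
          apply Finset.sum_le_sum
          intro k hk
          exact Real.rpow_le_rpow k.cast_nonneg
            (Nat.cast_le.2 (le_of_lt (Finset.mem_Ico.1 hk).2)) h0
      _ = (Finset.Ico 1 n).card * (n:ℝ)^γ := by rw [Finset.sum_const, nsmul_eq_mul]
      _ ≤ (n:ℝ) * (n:ℝ)^γ := by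
          apply mul_le_mul_of_nonneg_right _ (Real.rpow_nonneg hn0.le _)
          rw [Nat.card_Ico]
          exact_mod_cast Nat.sub_le n 1
      _ = 1 * (n:ℝ)^(γ+1) := by
          rw [one_mul, Real.rpow_add hn0, Real.rpow_one, mul_comm]
  · set p := γ + 1 with hp_def
    have hp0 : 0 < p := by simp only [hp_def]; linarith
    have hp1 : p ≤ 1 := by simp only [hp_def]; linarith
    have key : ∀ n : ℕ, p * ∑ k ∈ Finset.Ico 1 (n+1), (k:ℝ)^γ ≤ (n:ℝ)^p := by
      intro n
      induction n with
      | zero => simp [Real.rpow_nonneg]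
      | succ n ih =>
        rw [Finset.sum_Ico_succ_top (by omega)]
        have ht : (0:ℝ) < (n:ℝ) + 1 := by positivity
        -- Bernoulli step : p * (n+1)^(p-1) ≤ (n+1)^p - n^p
        have hb : p * ((n:ℝ)+1)^(p-1) ≤ ((n:ℝ)+1)^p - (n:ℝ)^p := by
          have hs : (-1:ℝ) ≤ -(((n:ℝ)+1)⁻¹) := by
            have : ((n:ℝ)+1)⁻¹ ≤ 1 := by
              apply inv_le_one_of_one_le₀; linarith
            linarith
          have hB := rpow_one_add_le_one_add_mul_self hs hp0.le hp1
          have e0 : (1:ℝ) + -(((n:ℝ)+1)⁻¹) = (n:ℝ)/((n:ℝ)+1) := by field_simp; ring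
          rw [e0] at hB
          have e1 : ((n:ℝ)/((n:ℝ)+1))^p = (n:ℝ)^p / (((n:ℝ)+1))^p :=
            Real.div_rpow n.cast_nonneg ht.le p
          rw [e1] at hB
          have hpow : (0:ℝ) < ((n:ℝ)+1)^p := Real.rpow_pos_of_pos ht p
          have e2 : ((n:ℝ)+1)^(p-1) = ((n:ℝ)+1)^p / ((n:ℝ)+1) := Real.rpow_sub_one ht.ne' p
          rw [div_le_iff₀ hpow] at hB
          rw [e2]
          have expand : (1 + p * -(((n:ℝ)+1)⁻¹)) * ((n:ℝ)+1)^p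
              = ((n:ℝ)+1)^p - p * (((n:ℝ)+1)^p / ((n:ℝ)+1)) := by
            field_simp
            ring
          rw [expand] at hB
          linarith
        have hpg : p - 1 = γ := by simp [hp_def]
        rw [hpg] at hb
        push_cast
        push_cast at ih hb
        nlinarith [hb, ih]
    refine ⟨1/p, by positivity, fun n hn => ?_⟩
    obtain ⟨m, rfl⟩ := Nat.exists_eq_add_of_le hn
    have hmn : ((m:ℝ)) ^ p ≤ ((1+m:ℕ):ℝ) ^ p := by
      apply Real.rpow_le_rpow m.cast_nonneg _ hp0.le
      push_cast; linarith
    have h2 : p * ∑ k ∈ Finset.Ico 1 (1+m), (k:ℝ)^γ ≤ ((1+m:ℕ):ℝ)^p := by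
      rw [Nat.add_comm 1 m]
      exact le_trans (key m) (by rw [Nat.add_comm 1 m] at hmn; exact hmn)
    rw [div_mul_eq_mul_div, le_div_iff₀ hp0, mul_comm]
    simpa using h2

lemma aux_sum_rpow_lt (γ : ℝ) (hγ : γ < -1) :
    ∃ C : ℝ, 0 < C ∧ ∀ n : ℕ, ∑ k ∈ Finset.Ico 2 n, (k:ℝ) ^ γ ≤ C := by
  have hsum : Summable (fun k : ℕ => (k:ℝ)^γ) := Real.summable_nat_rpow.2 hγ
  refine ⟨(∑' k : ℕ, (k:ℝ)^γ) + 1, ?_, fun n => ?_⟩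
  · have : 0 ≤ ∑' k : ℕ, (k:ℝ)^γ := tsum_nonneg (fun k => Real.rpow_nonneg k.cast_nonneg _)
    linarith
  · have h1 := Summable.sum_le_tsum (Finset.Ico 2 n) (fun i _ => Real.rpow_nonneg i.cast_nonneg _) hsum
    linarith

lemma aux_log_rpow_le (p δ : ℝ) (hp : 0 ≤ p) (hδ : 0 < δ) :
    ∃ C : ℝ, 0 < C ∧ ∀ t : ℝ, 1 ≤ t → (Real.log t) ^ p ≤ C * t ^ δ := by
  rcases eq_or_lt_of_le hp with rfl | hp0
  · exact ⟨1, one_pos, fun t ht => by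
      rw [Real.rpow_zero, one_mul]; exact Real.one_le_rpow ht hδ.le⟩
  · refine ⟨(p/δ)^p, Real.rpow_pos_of_pos (by positivity) p, fun t ht => ?_⟩
    have ht0 : (0:ℝ) < t := lt_of_lt_of_le one_pos ht
    have h1 : Real.log t ≤ t ^ (δ/p) / (δ/p) := Real.log_le_rpow_div ht0.le (by positivity)
    have e1 : t ^ (δ/p) / (δ/p) = t ^ (δ/p) * (p/δ) := by
      rw [div_eq_mul_inv, inv_div]
    rw [e1] at h1
    have h2 : (Real.log t)^p ≤ (t^(δ/p) * (p/δ))^p :=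
      Real.rpow_le_rpow (Real.log_nonneg ht) h1 hp0.le
    rw [Real.mul_rpow (Real.rpow_nonneg ht0.le _) (by positivity), ← Real.rpow_mul ht0.le,
      div_mul_cancel₀ _ (ne_of_gt hp0)] at h2
    linarith [h2]

lemma aux_abs_factor (z : ℂ) (t : ℝ) :
    ‖1 - z * t‖ ≤ Real.exp (-(z.re * t) + Complex.normSq z * t ^ 2 / 2) := by
  have e1 : Complex.normSq (1 - z * t) = 1 + (-(2 * z.re * t) + Complex.normSq z * t ^ 2) := by
    simp only [Complex.normSq_apply, Complex.sub_re, Complex.sub_im, Complex.mul_re,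
      Complex.mul_im, Complex.ofReal_re, Complex.ofReal_im, Complex.one_re, Complex.one_im]
    ring
  rw [Complex.norm_def, e1]
  set u := -(2 * z.re * t) + Complex.normSq z * t ^ 2 with hu
  have h1 : 1 + u ≤ Real.exp u := by linarith [Real.add_one_le_exp u]
  calc Real.sqrt (1 + u) ≤ Real.sqrt (Real.exp u) := Real.sqrt_le_sqrt h1
    _ = Real.exp (u / 2) := (Real.exp_half u).symm
    _ = Real.exp (-(z.re * t) + Complex.normSq z * t ^ 2 / 2) := by
        rw [hu]; congr 1; ring

lemma aux_abs_pos (r : ℕ → ℝ) (hr0 : ∀ n, 0 ≤ r n) (m0 : ℕ) (z : ℂ)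
    (hzr : ∀ m, m0 ≤ m → z.re * r m < 1) (m : ℕ) (hm : m0 ≤ m) :
    0 < ‖1 - z * (r m : ℂ)‖ := by
  have hre : (1 - z * ((r m : ℝ) : ℂ)).re = 1 - z.re * r m := by
    simp [Complex.sub_re, Complex.mul_re]
  have h1 : 0 < 1 - z.re * r m := by linarith [hzr m hm]
  calc (0:ℝ) < 1 - z.re * r m := h1
    _ = (1 - z * ((r m : ℝ) : ℂ)).re := hre.symm
    _ ≤ ‖1 - z * ((r m : ℝ) : ℂ)‖ := Complex.re_le_norm _

lemma aux_pprod_pos (r : ℕ → ℝ) (hr0 : ∀ n, 0 ≤ r n) (m0 : ℕ) (z : ℂ)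
    (hzr : ∀ m, m0 ≤ m → z.re * r m < 1) (n : ℕ) :
    0 < ‖pprod r m0 z n‖ := by
  unfold pprod
  rw [norm_prod]
  exact Finset.prod_pos fun m hm =>
    aux_abs_pos r hr0 m0 z hzr m (Finset.mem_Icc.1 hm).1

lemma aux_pprod_split (r : ℕ → ℝ) (m0 : ℕ) (hm0 : 1 ≤ m0) (z : ℂ) (k n : ℕ)
    (hk : m0 ≤ k) (hkn : k ≤ n) :
    pprod r m0 z n = pprod r m0 z k * ∏ m ∈ Finset.Ioc k n, (1 - z * (r m : ℂ)) := by
  unfold pprod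
  have h1 : m0 - 1 + 1 = m0 := by omega
  rw [← h1, Finset.Icc_add_one_left_eq_Ioc, Finset.Icc_add_one_left_eq_Ioc,
    Finset.prod_Ioc_consecutive _ (by omega : m0 - 1 ≤ k) hkn]

lemma aux_ratio (r : ℕ → ℝ) (hr0 : ∀ n, 0 ≤ r n) (m0 : ℕ) (hm0 : 1 ≤ m0) (x y : ℂ)
    (hxr : ∀ m, m0 ≤ m → x.re * r m < 1) (hyr : ∀ m, m0 ≤ m → y.re * r m < 1)
    (k n : ℕ) (hk : m0 ≤ k) (hkn : k ≤ n) :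
    ‖pprod r m0 x n‖ * ‖pprod r m0 y n‖ /
      (‖pprod r m0 x k‖ * ‖pprod r m0 y k‖)
    = ∏ m ∈ Finset.Ioc k n,
        (‖1 - x * (r m : ℂ)‖ * ‖1 - y * (r m : ℂ)‖) := by
  have hx0 : ‖pprod r m0 x k‖ ≠ 0 := (aux_pprod_pos r hr0 m0 x hxr k).ne'
  have hy0 : ‖pprod r m0 y k‖ ≠ 0 := (aux_pprod_pos r hr0 m0 y hyr k).ne'
  have ex : ‖pprod r m0 x n‖
      = ‖pprod r m0 x k‖ * ∏ m ∈ Finset.Ioc k n, ‖1 - x * (r m : ℂ)‖ := by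
    rw [aux_pprod_split r m0 hm0 x k n hk hkn, norm_mul, norm_prod]
  have ey : ‖pprod r m0 y n‖
      = ‖pprod r m0 y k‖ * ∏ m ∈ Finset.Ioc k n, ‖1 - y * (r m : ℂ)‖ := by
    rw [aux_pprod_split r m0 hm0 y k n hk hkn, norm_mul, norm_prod]
  rw [ex, ey, Finset.prod_mul_distrib]
  field_simp

set_option maxHeartbeats 1000000

lemma aux_prod_bound
    (c : ℝ) (hc : 0 < c) (r : ℕ → ℝ) (hr0 : ∀ n, 0 ≤ r n) (hr1 : ∀ n, r n < 1)
    (hrO : (fun n : ℕ => (n : ℝ) * r n - c) =O[atTop] fun n : ℕ => (n : ℝ)⁻¹)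
    (x y : ℂ) (hx : 0 < x.re) (hy : 0 < y.re)
    (hge : 1 ≤ c * (x.re + y.re))
    (m0 : ℕ) (hm0 : 2 ≤ m0) :
    ∃ CP C₃ : ℝ, 0 < CP ∧ 0 < C₃ ∧ (∀ k, m0 ≤ k → r k ≤ C₃ / k) ∧
      ∀ k n : ℕ, m0 ≤ k → k ≤ n →
        ∏ m ∈ Finset.Ioc k n,
            (‖1 - x * (r m : ℂ)‖ * ‖1 - y * (r m : ℂ)‖)
          ≤ CP * (((k : ℝ) + 1) ^ (c * (x.re + y.re)) / ((n : ℝ) + 1) ^ (c * (x.re + y.re))) := by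
  set s := c * (x.re + y.re) with hs_def
  have hs0 : 0 < s := lt_of_lt_of_le one_pos hge
  clear_value s
  -- constants from the big-O hypothesis
  obtain ⟨C₁, hC₁0, hC₁⟩ := hrO.exists_pos
  rw [IsBigOWith, eventually_atTop] at hC₁
  obtain ⟨N₀, hN₀⟩ := hC₁
  set N₁ := max N₀ (m0 + 1) with hN₁_def
  have hN₁1 : 1 ≤ N₁ := le_trans (by omega) (le_max_right _ _)
  have hN₁m0 : m0 + 1 ≤ N₁ := le_max_right _ _
  have hN₀N₁ : N₀ ≤ N₁ := le_max_left _ _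
  set C₃ := c + C₁ + N₁ with hC₃_def
  have hC₃0 : 0 < C₃ := by rw [hC₃_def]; positivity
  clear_value C₃
  -- upper bound on r
  have hrup : ∀ k, m0 ≤ k → r k ≤ C₃ / k := by
    intro k hk
    have hk1 : 1 ≤ k := by omega
    have hk0 : (0:ℝ) < k := by exact_mod_cast hk1
    rw [le_div_iff₀ hk0, hC₃_def]
    rcases le_or_gt N₀ k with h | h
    · have h1 := hN₀ k h
      simp only [Real.norm_eq_abs, abs_inv, Nat.abs_cast] at h1
      have h2 : (k:ℝ) * r k - c ≤ C₁ * (k:ℝ)⁻¹ := (abs_le.1 h1).2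
      have hk1r : (1:ℝ) ≤ (k:ℝ) := by exact_mod_cast hk1
      have h3 : C₁ * (k:ℝ)⁻¹ ≤ C₁ := by
        rw [mul_inv_le_iff₀ hk0]
        nlinarith [hC₁0.le, hk1r]
      have hN₁0 : (0:ℝ) ≤ (N₁:ℝ) := by positivity
      nlinarith [hr0 k]
    · have hkN : (k:ℝ) ≤ (N₁:ℝ) := by exact_mod_cast (by omega : k ≤ N₁)
      nlinarith [hr1 k, hr0 k]
  -- lower bound on r
  have hrlow : ∀ m : ℕ, N₁ ≤ m → c * (m:ℝ)⁻¹ - C₁ * ((m:ℝ) * m)⁻¹ ≤ r m := by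
    intro m hmN
    have hm1 : 1 ≤ m := le_trans hN₁1 hmN
    have hm0' : (0:ℝ) < m := by exact_mod_cast hm1
    have h1 := hN₀ m (le_trans hN₀N₁ hmN)
    simp only [Real.norm_eq_abs, abs_inv, Nat.abs_cast] at h1
    have h2 : c - C₁ * (m:ℝ)⁻¹ ≤ (m:ℝ) * r m := by linarith [(abs_le.1 h1).1]
    have h3 : (c - C₁ * (m:ℝ)⁻¹) / m ≤ r m := by
      rw [div_le_iff₀ hm0'] at *
      nlinarith [h2]
    calc c * (m:ℝ)⁻¹ - C₁ * ((m:ℝ)*m)⁻¹ = (c - C₁ * (m:ℝ)⁻¹) / m := by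
          field_simp
      _ ≤ r m := h3
  -- bound B on individual factors
  set B := (1 + ‖x‖) * (1 + ‖y‖) with hB_def
  have hB1 : 1 ≤ B := by
    rw [hB_def]; nlinarith [norm_nonneg x, norm_nonneg y]
  have hqB : ∀ m : ℕ, ‖1 - x * (r m : ℂ)‖ * ‖1 - y * (r m : ℂ)‖ ≤ B := by
    intro m
    have hone : ∀ z : ℂ, ‖1 - z * (r m : ℂ)‖ ≤ 1 + ‖z‖ := by
      intro z
      calc ‖1 - z * (r m : ℂ)‖ ≤ ‖(1:ℂ)‖ + ‖z * (r m : ℂ)‖ := by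
            simpa using norm_sub_le (1 : ℂ) (z * (r m : ℂ))
        _ = 1 + ‖z‖ * |r m| := by rw [norm_one, norm_mul, Complex.norm_real, Real.norm_eq_abs]
        _ ≤ 1 + ‖z‖ := by
            have h1 : |r m| ≤ 1 := by rw [abs_of_nonneg (hr0 m)]; exact (hr1 m).le
            nlinarith [norm_nonneg z]
    rw [hB_def]
    have h1 := hone x
    have h2 := hone y
    have := norm_nonneg (1 - x * (r m : ℂ))
    have := norm_nonneg (1 - y * (r m : ℂ))
    nlinarith [norm_nonneg x, norm_nonneg y]
  clear_value B
  set D := (x.re + y.re) * C₁ + (Complex.normSq x + Complex.normSq y) / 2 * C₃ ^ 2 with hD_def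
  have hD0 : 0 ≤ D := by
    rw [hD_def]
    have h1 := Complex.normSq_nonneg x
    have h2 := Complex.normSq_nonneg y
    have h3 : (0:ℝ) ≤ (x.re + y.re) * C₁ := mul_nonneg (by linarith) hC₁0.le
    have h4 : (0:ℝ) ≤ (Complex.normSq x + Complex.normSq y) / 2 * C₃ ^ 2 :=
      mul_nonneg (by linarith) (sq_nonneg _)
    linarith
  clear_value D
  -- exponential bound for large m
  have hq_exp : ∀ m : ℕ, N₁ ≤ m →
      ‖1 - x * (r m : ℂ)‖ * ‖1 - y * (r m : ℂ)‖
        ≤ Real.exp (-(s * (m:ℝ)⁻¹) + D * ((m:ℝ) * m)⁻¹) := by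
    intro m hmN
    have hm1 : 1 ≤ m := le_trans hN₁1 hmN
    have hmpos : (0:ℝ) < m := by exact_mod_cast hm1
    have h1 := aux_abs_factor x (r m)
    have h2 := aux_abs_factor y (r m)
    have h3 : ‖1 - x * (r m : ℂ)‖ * ‖1 - y * (r m : ℂ)‖
        ≤ Real.exp (-((x.re + y.re) * r m)
            + (Complex.normSq x + Complex.normSq y) / 2 * (r m) ^ 2) := by
      calc ‖1 - x * (r m : ℂ)‖ * ‖1 - y * (r m : ℂ)‖
          ≤ Real.exp (-(x.re * r m) + Complex.normSq x * (r m) ^ 2 / 2)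
            * Real.exp (-(y.re * r m) + Complex.normSq y * (r m) ^ 2 / 2) :=
            mul_le_mul h1 h2 (norm_nonneg _) (Real.exp_nonneg _)
        _ = _ := by rw [← Real.exp_add]; congr 1; ring
    refine le_trans h3 (Real.exp_le_exp.2 ?_)
    have hup := hrup m (by omega)
    have hlow := hrlow m hmN
    have e1 : -((x.re + y.re) * r m) ≤ -(s * (m:ℝ)⁻¹) + (x.re + y.re) * C₁ * ((m:ℝ)*m)⁻¹ := by
      have h4 : (x.re + y.re) * (c * (m:ℝ)⁻¹ - C₁ * ((m:ℝ)*m)⁻¹) ≤ (x.re + y.re) * r m :=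
        mul_le_mul_of_nonneg_left hlow (by linarith)
      have e2 : (x.re + y.re) * (c * (m:ℝ)⁻¹ - C₁ * ((m:ℝ)*m)⁻¹)
          = s * (m:ℝ)⁻¹ - (x.re + y.re) * C₁ * ((m:ℝ)*m)⁻¹ := by
        rw [hs_def]; ring
      linarith [h4, e2.symm.le, e2.le]
    have e3 : (Complex.normSq x + Complex.normSq y) / 2 * (r m) ^ 2
        ≤ (Complex.normSq x + Complex.normSq y) / 2 * C₃ ^ 2 * ((m:ℝ)*m)⁻¹ := by
      have h5 : (r m) ^ 2 ≤ (C₃ / m) ^ 2 := by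
        apply pow_le_pow_left₀ (hr0 m) hup 2
      have e4 : (C₃ / (m:ℝ)) ^ 2 = C₃ ^ 2 * ((m:ℝ)*m)⁻¹ := by
        field_simp
      have h6 : (0:ℝ) ≤ (Complex.normSq x + Complex.normSq y) / 2 := by
        have := Complex.normSq_nonneg x
        have := Complex.normSq_nonneg y
        linarith
      calc (Complex.normSq x + Complex.normSq y) / 2 * (r m) ^ 2
          ≤ (Complex.normSq x + Complex.normSq y) / 2 * (C₃ / m) ^ 2 :=
            mul_le_mul_of_nonneg_left h5 h6
        _ = (Complex.normSq x + Complex.normSq y) / 2 * C₃ ^ 2 * ((m:ℝ)*m)⁻¹ := by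
            rw [e4]; ring
    have eD : D * ((m:ℝ)*m)⁻¹ = (x.re + y.re) * C₁ * ((m:ℝ)*m)⁻¹
        + (Complex.normSq x + Complex.normSq y) / 2 * C₃ ^ 2 * ((m:ℝ)*m)⁻¹ := by
      rw [hD_def]; ring
    linarith [e1, e3, eD.le, eD.ge]
  -- bound for small m
  have hq_small : ∀ m : ℕ, 1 ≤ m →
      ‖1 - x * (r m : ℂ)‖ * ‖1 - y * (r m : ℂ)‖
        ≤ Real.exp (-(s * (m:ℝ)⁻¹) + (Real.log B + s)) := by
    intro m hm1
    have hmpos : (0:ℝ) < m := by exact_mod_cast hm1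
    have h1 : (m:ℝ)⁻¹ ≤ 1 := by
      rw [inv_le_one_iff₀]; right; exact_mod_cast hm1
    have h2 : Real.log B ≤ -(s * (m:ℝ)⁻¹) + (Real.log B + s) := by
      have h3 : s * (m:ℝ)⁻¹ ≤ s * 1 := mul_le_mul_of_nonneg_left h1 hs0.le
      linarith
    calc ‖1 - x * (r m : ℂ)‖ * ‖1 - y * (r m : ℂ)‖ ≤ B := hqB m
      _ = Real.exp (Real.log B) := (Real.exp_log (by linarith)).symm
      _ ≤ Real.exp (-(s * (m:ℝ)⁻¹) + (Real.log B + s)) := Real.exp_le_exp.2 h2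
  -- main product estimate
  refine ⟨Real.exp ((N₁:ℝ) * (Real.log B + s) + D), C₃, Real.exp_pos _, hC₃0, hrup, ?_⟩
  intro k n hk hkn
  have hk1 : 1 ≤ k := by omega
  have hLBs : 0 ≤ Real.log B + s := by
    have := Real.log_nonneg hB1
    linarith
  set cseq : ℕ → ℝ := fun m => if m < N₁ then Real.log B + s else D * ((m:ℝ)*m)⁻¹ with hcseq
  have step1 : ∏ m ∈ Finset.Ioc k n,
      (‖1 - x * (r m : ℂ)‖ * ‖1 - y * (r m : ℂ)‖)
      ≤ ∏ m ∈ Finset.Ioc k n, Real.exp (-(s * (m:ℝ)⁻¹) + cseq m) := by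
    apply Finset.prod_le_prod
    · intro m _; positivity
    · intro m hmm
      have hm1 : 1 ≤ m := by
        have := (Finset.mem_Ioc.1 hmm).1; omega
      rw [hcseq]
      by_cases hcase : m < N₁
      · simpa [hcase] using hq_small m hm1
      · simp only [hcase, if_false]
        exact hq_exp m (by omega)
  have step2 : ∏ m ∈ Finset.Ioc k n, Real.exp (-(s * (m:ℝ)⁻¹) + cseq m)
      = Real.exp (∑ m ∈ Finset.Ioc k n, (-(s * (m:ℝ)⁻¹) + cseq m)) :=
    (Real.exp_sum _ _).symm
  have step3 : ∑ m ∈ Finset.Ioc k n, (-(s * (m:ℝ)⁻¹) + cseq m)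
      = -(s * ∑ m ∈ Finset.Ioc k n, (m:ℝ)⁻¹) + ∑ m ∈ Finset.Ioc k n, cseq m := by
    rw [Finset.sum_add_distrib, Finset.mul_sum, ← Finset.sum_neg_distrib]
  have step4 : ∑ m ∈ Finset.Ioc k n, cseq m ≤ (N₁:ℝ) * (Real.log B + s) + D := by
    have hb : ∀ m ∈ Finset.Ioc k n,
        cseq m ≤ (if m < N₁ then Real.log B + s else 0) + D * ((m:ℝ)*m)⁻¹ := by
      intro m hmm
      have hm1 : 1 ≤ m := by have := (Finset.mem_Ioc.1 hmm).1; omega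
      have hmpos : (0:ℝ) < m := by exact_mod_cast hm1
      rw [hcseq]
      by_cases hcase : m < N₁
      · simp only [hcase, if_true]
        have : (0:ℝ) ≤ D * ((m:ℝ)*m)⁻¹ := by positivity
        linarith
      · simp only [hcase, if_false]
        linarith
    calc ∑ m ∈ Finset.Ioc k n, cseq m
        ≤ ∑ m ∈ Finset.Ioc k n, ((if m < N₁ then Real.log B + s else 0) + D * ((m:ℝ)*m)⁻¹) :=
          Finset.sum_le_sum hb
      _ = (∑ m ∈ Finset.Ioc k n, (if m < N₁ then Real.log B + s else 0))
            + D * ∑ m ∈ Finset.Ioc k n, ((m:ℝ)*m)⁻¹ := by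
          rw [Finset.sum_add_distrib, Finset.mul_sum]
      _ ≤ (N₁:ℝ) * (Real.log B + s) + D := by
          have hA : (∑ m ∈ Finset.Ioc k n, (if m < N₁ then Real.log B + s else 0))
              ≤ (N₁:ℝ) * (Real.log B + s) := by
            rw [← Finset.sum_filter, Finset.sum_const, nsmul_eq_mul]
            have hcard : ((Finset.Ioc k n).filter (· < N₁)).card ≤ N₁ := by
              have hsub : (Finset.Ioc k n).filter (· < N₁) ⊆ Finset.range N₁ := by
                intro m hmm
                rw [Finset.mem_range]
                exact (Finset.mem_filter.1 hmm).2
              simpa using Finset.card_le_card hsub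
            have hcard' : (((Finset.Ioc k n).filter (· < N₁)).card : ℝ) ≤ (N₁:ℝ) := by
              exact_mod_cast hcard
            exact mul_le_mul_of_nonneg_right hcard' hLBs
          have hB2 : D * ∑ m ∈ Finset.Ioc k n, ((m:ℝ)*m)⁻¹ ≤ D := by
            calc D * ∑ m ∈ Finset.Ioc k n, ((m:ℝ)*m)⁻¹
                ≤ D * 1 := mul_le_mul_of_nonneg_left (aux_sum_sq_inv k hk1 n) hD0
              _ = D := mul_one D
          linarith
  have step5 : -(s * ∑ m ∈ Finset.Ioc k n, (m:ℝ)⁻¹)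
      ≤ -(s * (Real.log ((n:ℝ)+1) - Real.log ((k:ℝ)+1))) := by
    have := aux_log_sum_lower k hk1 n hkn
    have := mul_le_mul_of_nonneg_left this hs0.le
    linarith
  calc ∏ m ∈ Finset.Ioc k n,
        (‖1 - x * (r m : ℂ)‖ * ‖1 - y * (r m : ℂ)‖)
      ≤ ∏ m ∈ Finset.Ioc k n, Real.exp (-(s * (m:ℝ)⁻¹) + cseq m) := step1
    _ = Real.exp (∑ m ∈ Finset.Ioc k n, (-(s * (m:ℝ)⁻¹) + cseq m)) := step2
    _ ≤ Real.exp (-(s * (Real.log ((n:ℝ)+1) - Real.log ((k:ℝ)+1)))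
          + ((N₁:ℝ) * (Real.log B + s) + D)) := by
        apply Real.exp_le_exp.2
        rw [step3]
        linarith [step4, step5]
    _ = Real.exp ((N₁:ℝ) * (Real.log B + s) + D)
          * (((k:ℝ)+1) ^ s / ((n:ℝ)+1) ^ s) := by
        have hkpos : (0:ℝ) < (k:ℝ) + 1 := by positivity
        have hnpos : (0:ℝ) < (n:ℝ) + 1 := by positivity
        rw [Real.rpow_def_of_pos hkpos, Real.rpow_def_of_pos hnpos, ← Real.exp_sub, ← Real.exp_add]
        congr 1
        ring

set_option maxHeartbeats 1000000 in
lemma main_aux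
    (c : ℝ) (hc : 0 < c) (r : ℕ → ℝ) (hr0 : ∀ n, 0 ≤ r n) (hr1 : ∀ n, r n < 1)
    (hrO : (fun n : ℕ => (n : ℝ) * r n - c) =O[atTop] fun n : ℕ => (n : ℝ)⁻¹)
    (x y : ℂ) (hx : 0 < x.re) (hy : 0 < y.re)
    (hge : 1 ≤ c * (x.re + y.re))
    (m0 : ℕ) (hm0 : 2 ≤ m0) (hm : ∀ m, m0 ≤ m → max x.re y.re * r m < 1)
    (u : ℝ) (hu : 1 ≤ u) (p : ℝ) (hp : 0 ≤ p) :
    (u * (c * (x.re + y.re)) < 2 * u - 1 →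
      (fun n : ℕ => ∑ k ∈ Finset.Ico m0 n, r k ^ (2 * u) *
          Real.log ((n : ℝ) / k) ^ p *
          (‖pprod r m0 x n‖ * ‖pprod r m0 y n‖ /
            (‖pprod r m0 x k‖ * ‖pprod r m0 y k‖)) ^ u)
        =O[atTop] fun n : ℕ =>
          (n : ℝ) ^ (-(u * (c * (x.re + y.re)))) * Real.log n ^ p) ∧
    (u * (c * (x.re + y.re)) = 2 * u - 1 →
      (fun n : ℕ => ∑ k ∈ Finset.Ico m0 n, r k ^ (2 * u) *
          Real.log ((n : ℝ) / k) ^ p *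
          (‖pprod r m0 x n‖ * ‖pprod r m0 y n‖ /
            (‖pprod r m0 x k‖ * ‖pprod r m0 y k‖)) ^ u)
        =O[atTop] fun n : ℕ => (n : ℝ) ^ (-(2 * u - 1)) * Real.log n ^ (p + 1)) ∧
    (2 * u - 1 < u * (c * (x.re + y.re)) →
      (fun n : ℕ => ∑ k ∈ Finset.Ico m0 n, r k ^ (2 * u) *
          Real.log ((n : ℝ) / k) ^ p *
          (‖pprod r m0 x n‖ * ‖pprod r m0 y n‖ /
            (‖pprod r m0 x k‖ * ‖pprod r m0 y k‖)) ^ u)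
        =O[atTop] fun n : ℕ => (n : ℝ) ^ (-(2 * u - 1))) := by
  have hu0 : (0:ℝ) < u := lt_of_lt_of_le one_pos hu
  have hxr : ∀ m, m0 ≤ m → x.re * r m < 1 := fun m hmm =>
    lt_of_le_of_lt (mul_le_mul_of_nonneg_right (le_max_left x.re y.re) (hr0 m)) (hm m hmm)
  have hyr : ∀ m, m0 ≤ m → y.re * r m < 1 := fun m hmm =>
    lt_of_le_of_lt (mul_le_mul_of_nonneg_right (le_max_right x.re y.re) (hr0 m)) (hm m hmm)
  obtain ⟨CP, C₃, hCP0, hC₃0, hrup, hQ⟩ :=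
    aux_prod_bound c hc r hr0 hr1 hrO x y hx hy hge m0 hm0
  set s := c * (x.re + y.re) with hs_def
  have hs1 : 1 ≤ s := hge
  have hs0 : 0 < s := lt_of_lt_of_le one_pos hs1
  clear_value s
  -- ratio bound
  have hratio_bound : ∀ k n : ℕ, m0 ≤ k → k < n →
      ‖pprod r m0 x n‖ * ‖pprod r m0 y n‖ /
        (‖pprod r m0 x k‖ * ‖pprod r m0 y k‖)
      ≤ (CP * 2 ^ s) * ((k:ℝ)/n) ^ s := by
    intro k n hk hkn
    rw [aux_ratio r hr0 m0 (by omega) x y hxr hyr k n hk hkn.le]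
    refine le_trans (hQ k n hk hkn.le) ?_
    have hk0 : (0:ℝ) < k := by exact_mod_cast (by omega : 0 < k)
    have hn0 : (0:ℝ) < n := by exact_mod_cast (by omega : 0 < n)
    have hkr : (1:ℝ) ≤ (k:ℝ) := by exact_mod_cast (by omega : 1 ≤ k)
    have h1 : ((k:ℝ)+1)/((n:ℝ)+1) ≤ 2 * ((k:ℝ)/n) := by
      rw [div_le_iff₀ (by positivity)]
      have e : 2 * ((k:ℝ)/n) * ((n:ℝ)+1) = 2*(k:ℝ)*((n:ℝ)+1)/n := by ring
      rw [e, le_div_iff₀ hn0]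
      nlinarith [hkr, hn0]
    have h2 : ((k:ℝ)+1) ^ s / ((n:ℝ)+1) ^ s = (((k:ℝ)+1)/((n:ℝ)+1)) ^ s :=
      (Real.div_rpow (by positivity) (by positivity) s).symm
    have h3 : (((k:ℝ)+1)/((n:ℝ)+1)) ^ s ≤ (2 * ((k:ℝ)/n)) ^ s :=
      Real.rpow_le_rpow (by positivity) h1 hs0.le
    have h4 : (2 * ((k:ℝ)/n)) ^ s = 2 ^ s * ((k:ℝ)/n) ^ s :=
      Real.mul_rpow (by norm_num) (by positivity)
    calc CP * (((k:ℝ)+1) ^ s / ((n:ℝ)+1) ^ s)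
        = CP * (((k:ℝ)+1)/((n:ℝ)+1)) ^ s := by rw [h2]
      _ ≤ CP * (2 * ((k:ℝ)/n)) ^ s := mul_le_mul_of_nonneg_left h3 hCP0.le
      _ = CP * 2 ^ s * ((k:ℝ)/n) ^ s := by rw [h4]; ring
  have hCP2 : 0 < CP * 2 ^ s := mul_pos hCP0 (Real.rpow_pos_of_pos two_pos s)
  set K := C₃ ^ (2*u) * (CP * 2 ^ s) ^ u with hK_def
  have hK0 : 0 < K := by
    rw [hK_def]
    exact mul_pos (Real.rpow_pos_of_pos hC₃0 _) (Real.rpow_pos_of_pos hCP2 u)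
  clear_value K
  -- pointwise term bound
  have hterm : ∀ n k : ℕ, m0 ≤ k → k < n →
      r k ^ (2*u) * Real.log ((n:ℝ)/k) ^ p *
        (‖pprod r m0 x n‖ * ‖pprod r m0 y n‖ /
          (‖pprod r m0 x k‖ * ‖pprod r m0 y k‖)) ^ u
      ≤ (K * ((k:ℝ) ^ (u*s - 2*u) * Real.log ((n:ℝ)/k) ^ p)) * (n:ℝ) ^ (-(u*s)) := by
    intro n k hk hkn
    have hk0 : (0:ℝ) < k := by exact_mod_cast (by omega : 0 < k)
    have hn0 : (0:ℝ) < n := by exact_mod_cast (by omega : 0 < n)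
    have hkn' : (k:ℝ) ≤ (n:ℝ) := by exact_mod_cast hkn.le
    have hlognn : 0 ≤ Real.log ((n:ℝ)/k) := Real.log_nonneg ((one_le_div hk0).2 hkn')
    have hlogp : 0 ≤ Real.log ((n:ℝ)/k) ^ p := Real.rpow_nonneg hlognn p
    have hratio_nn : 0 ≤ ‖pprod r m0 x n‖ * ‖pprod r m0 y n‖ /
        (‖pprod r m0 x k‖ * ‖pprod r m0 y k‖) :=
      div_nonneg (mul_nonneg (norm_nonneg _) (norm_nonneg _))
        (mul_nonneg (norm_nonneg _) (norm_nonneg _))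
    have h1 : r k ^ (2*u) ≤ (C₃ / (k:ℝ)) ^ (2*u) :=
      Real.rpow_le_rpow (hr0 k) (hrup k hk) (by positivity)
    have h2 : (‖pprod r m0 x n‖ * ‖pprod r m0 y n‖ /
          (‖pprod r m0 x k‖ * ‖pprod r m0 y k‖)) ^ u
        ≤ ((CP * 2 ^ s) * ((k:ℝ)/n) ^ s) ^ u :=
      Real.rpow_le_rpow hratio_nn (hratio_bound k n hk hkn) hu0.le
    have h3 : r k ^ (2*u) * Real.log ((n:ℝ)/k) ^ p *
          (‖pprod r m0 x n‖ * ‖pprod r m0 y n‖ /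
            (‖pprod r m0 x k‖ * ‖pprod r m0 y k‖)) ^ u
        ≤ (C₃ / (k:ℝ)) ^ (2*u) * Real.log ((n:ℝ)/k) ^ p *
            (((CP * 2 ^ s) * ((k:ℝ)/n) ^ s) ^ u) := by
      apply mul_le_mul
      · exact mul_le_mul_of_nonneg_right h1 hlogp
      · exact h2
      · exact Real.rpow_nonneg hratio_nn u
      · exact mul_nonneg (Real.rpow_nonneg (by positivity) _) hlogp
    refine le_trans h3 (le_of_eq ?_)
    have e1 : (C₃/(k:ℝ)) ^ (2*u) = C₃ ^ (2*u) * ((k:ℝ)) ^ (-(2*u)) := by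
      rw [Real.div_rpow hC₃0.le hk0.le, Real.rpow_neg hk0.le, div_eq_mul_inv]
    have e2 : (((CP * 2 ^ s) * ((k:ℝ)/n) ^ s) ^ u)
        = (CP * 2 ^ s) ^ u * ((k:ℝ) ^ (s*u) * ((n:ℝ)) ^ (-(s*u))) := by
      rw [Real.mul_rpow hCP2.le (Real.rpow_nonneg (by positivity) s),
        ← Real.rpow_mul (by positivity : (0:ℝ) ≤ (k:ℝ)/n),
        Real.div_rpow hk0.le hn0.le, Real.rpow_neg hn0.le, div_eq_mul_inv]
    have e3 : ((k:ℝ)) ^ (-(2*u)) * ((k:ℝ)) ^ (s*u) = (k:ℝ) ^ (u*s - 2*u) := by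
      rw [← Real.rpow_add hk0]
      congr 1
      ring
    have e4 : ((n:ℝ)) ^ (-(s*u)) = ((n:ℝ)) ^ (-(u*s)) := by rw [mul_comm]
    rw [e1, e2, e4, ← e3, hK_def]
    ring
  -- common facts for the sums
  have hsummand_nn : ∀ n : ℕ, ∀ k ∈ Finset.Ico m0 n,
      0 ≤ r k ^ (2*u) * Real.log ((n:ℝ)/k) ^ p *
        (‖pprod r m0 x n‖ * ‖pprod r m0 y n‖ /
          (‖pprod r m0 x k‖ * ‖pprod r m0 y k‖)) ^ u := by
    intro n k hkk
    obtain ⟨hk, hkn⟩ := Finset.mem_Ico.1 hkk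
    have hk0 : (0:ℝ) < k := by exact_mod_cast (by omega : 0 < k)
    have hkn' : (k:ℝ) ≤ (n:ℝ) := by exact_mod_cast hkn.le
    have hlognn : 0 ≤ Real.log ((n:ℝ)/k) := Real.log_nonneg ((one_le_div hk0).2 hkn')
    exact mul_nonneg (mul_nonneg (Real.rpow_nonneg (hr0 k) _) (Real.rpow_nonneg hlognn _))
      (Real.rpow_nonneg (div_nonneg (mul_nonneg (norm_nonneg _) (norm_nonneg _))
        (mul_nonneg (norm_nonneg _) (norm_nonneg _))) u)
  have hsum1 : ∀ n : ℕ,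
      (∑ k ∈ Finset.Ico m0 n, r k ^ (2*u) * Real.log ((n:ℝ)/k) ^ p *
        (‖pprod r m0 x n‖ * ‖pprod r m0 y n‖ /
          (‖pprod r m0 x k‖ * ‖pprod r m0 y k‖)) ^ u)
      ≤ ∑ k ∈ Finset.Ico m0 n,
          (K * ((k:ℝ) ^ (u*s - 2*u) * Real.log ((n:ℝ)/k) ^ p)) * (n:ℝ) ^ (-(u*s)) :=
    fun n => Finset.sum_le_sum fun k hkk =>
      hterm n k (Finset.mem_Ico.1 hkk).1 (Finset.mem_Ico.1 hkk).2
  refine ⟨?_, ?_, ?_⟩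
  · -- case u*s < 2u - 1
    intro hlt
    obtain ⟨C₂, hC₂0, hC₂⟩ := aux_sum_rpow_lt (u*s - 2*u) (by linarith)
    rw [isBigO_iff]
    refine ⟨K * C₂, ?_⟩
    rw [eventually_atTop]
    refine ⟨max (m0+1) 3, fun n hn => ?_⟩
    have hn3 : 3 ≤ n := le_trans (le_max_right _ _) hn
    have hnm0 : m0 < n := by
      have := le_trans (le_max_left (m0+1) 3) hn; omega
    have hn0 : (0:ℝ) < n := by exact_mod_cast (by omega : 0 < n)
    have hn1 : (1:ℝ) ≤ n := by exact_mod_cast (by omega : 1 ≤ n)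
    have hlog1 : 1 ≤ Real.log n := aux_one_le_log n hn3
    have hM : 0 ≤ (n:ℝ) ^ (-(u*s)) := Real.rpow_nonneg hn0.le _
    have hLg : 0 ≤ Real.log (n:ℝ) ^ p := Real.rpow_nonneg (by linarith) p
    rw [Real.norm_eq_abs, Real.norm_eq_abs,
      abs_of_nonneg (Finset.sum_nonneg (hsummand_nn n)),
      abs_of_nonneg (mul_nonneg hM hLg)]
    calc (∑ k ∈ Finset.Ico m0 n, r k ^ (2*u) * Real.log ((n:ℝ)/k) ^ p *
            (‖pprod r m0 x n‖ * ‖pprod r m0 y n‖ /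
              (‖pprod r m0 x k‖ * ‖pprod r m0 y k‖)) ^ u)
        ≤ ∑ k ∈ Finset.Ico m0 n,
            (K * ((k:ℝ) ^ (u*s - 2*u) * Real.log ((n:ℝ)/k) ^ p)) * (n:ℝ) ^ (-(u*s)) := hsum1 n
      _ ≤ ∑ k ∈ Finset.Ico m0 n,
            (K * Real.log (n:ℝ) ^ p * (n:ℝ) ^ (-(u*s))) * (k:ℝ) ^ (u*s - 2*u) := by
          apply Finset.sum_le_sum
          intro k hkk
          obtain ⟨hk, hkn⟩ := Finset.mem_Ico.1 hkk
          have hk0 : (0:ℝ) < k := by exact_mod_cast (by omega : 0 < k)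
          have hk1 : (1:ℝ) ≤ (k:ℝ) := by exact_mod_cast (by omega : 1 ≤ k)
          have hkn' : (k:ℝ) ≤ (n:ℝ) := by exact_mod_cast hkn.le
          have hdivpos : (0:ℝ) < (n:ℝ)/k := by positivity
          have hlogle : Real.log ((n:ℝ)/k) ≤ Real.log (n:ℝ) :=
            Real.log_le_log hdivpos (by
              rw [div_le_iff₀ hk0]; nlinarith)
          have hlognn : 0 ≤ Real.log ((n:ℝ)/k) := Real.log_nonneg ((one_le_div hk0).2 hkn')
          have hlple : Real.log ((n:ℝ)/k) ^ p ≤ Real.log (n:ℝ) ^ p :=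
            Real.rpow_le_rpow hlognn hlogle hp
          have step : K * ((k:ℝ) ^ (u*s - 2*u) * Real.log ((n:ℝ)/k) ^ p)
              ≤ K * ((k:ℝ) ^ (u*s - 2*u) * Real.log (n:ℝ) ^ p) :=
            mul_le_mul_of_nonneg_left
              (mul_le_mul_of_nonneg_left hlple (Real.rpow_nonneg hk0.le _)) hK0.le
          calc (K * ((k:ℝ) ^ (u*s - 2*u) * Real.log ((n:ℝ)/k) ^ p)) * (n:ℝ) ^ (-(u*s))
              ≤ (K * ((k:ℝ) ^ (u*s - 2*u) * Real.log (n:ℝ) ^ p)) * (n:ℝ) ^ (-(u*s)) :=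
                mul_le_mul_of_nonneg_right step hM
            _ = (K * Real.log (n:ℝ) ^ p * (n:ℝ) ^ (-(u*s))) * (k:ℝ) ^ (u*s - 2*u) := by ring
      _ = (K * Real.log (n:ℝ) ^ p * (n:ℝ) ^ (-(u*s)))
            * ∑ k ∈ Finset.Ico m0 n, (k:ℝ) ^ (u*s - 2*u) := by
          rw [← Finset.mul_sum]
      _ ≤ (K * Real.log (n:ℝ) ^ p * (n:ℝ) ^ (-(u*s))) * C₂ := by
          apply mul_le_mul_of_nonneg_left _ (by positivity)
          refine le_trans (Finset.sum_le_sum_of_subset_of_nonneg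
            (Finset.Ico_subset_Ico (by omega) le_rfl)
            (fun i _ _ => Real.rpow_nonneg i.cast_nonneg _)) (hC₂ n)
      _ = K * C₂ * ((n:ℝ) ^ (-(u*s)) * Real.log (n:ℝ) ^ p) := by ring
  · -- case u*s = 2u - 1
    intro heq
    have hα : u*s - 2*u = -1 := by linarith
    rw [isBigO_iff]
    refine ⟨K * 2, ?_⟩
    rw [eventually_atTop]
    refine ⟨max (m0+1) 3, fun n hn => ?_⟩
    have hn3 : 3 ≤ n := le_trans (le_max_right _ _) hn
    have hnm0 : m0 < n := by
      have := le_trans (le_max_left (m0+1) 3) hn; omega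
    have hn0 : (0:ℝ) < n := by exact_mod_cast (by omega : 0 < n)
    have hn1 : (1:ℝ) ≤ n := by exact_mod_cast (by omega : 1 ≤ n)
    have hlog1 : 1 ≤ Real.log n := aux_one_le_log n hn3
    have hlog0 : (0:ℝ) < Real.log n := by linarith
    have hM : 0 ≤ (n:ℝ) ^ (-(u*s)) := Real.rpow_nonneg hn0.le _
    have hLg : 0 ≤ Real.log (n:ℝ) ^ p := Real.rpow_nonneg (by linarith) p
    have hRHS : (n:ℝ) ^ (-(2*u-1)) * Real.log (n:ℝ) ^ (p+1)
        = ((n:ℝ) ^ (-(u*s)) * Real.log (n:ℝ) ^ p) * Real.log (n:ℝ) := by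
      rw [Real.rpow_add_one hlog0.ne' p, heq]
      ring
    rw [Real.norm_eq_abs, Real.norm_eq_abs,
      abs_of_nonneg (Finset.sum_nonneg (hsummand_nn n)),
      abs_of_nonneg (by rw [hRHS]; positivity)]
    rw [hRHS]
    calc (∑ k ∈ Finset.Ico m0 n, r k ^ (2*u) * Real.log ((n:ℝ)/k) ^ p *
            (‖pprod r m0 x n‖ * ‖pprod r m0 y n‖ /
              (‖pprod r m0 x k‖ * ‖pprod r m0 y k‖)) ^ u)
        ≤ ∑ k ∈ Finset.Ico m0 n,
            (K * ((k:ℝ) ^ (u*s - 2*u) * Real.log ((n:ℝ)/k) ^ p)) * (n:ℝ) ^ (-(u*s)) := hsum1 n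
      _ ≤ ∑ k ∈ Finset.Ico m0 n,
            (K * Real.log (n:ℝ) ^ p * (n:ℝ) ^ (-(u*s))) * ((k:ℝ))⁻¹ := by
          apply Finset.sum_le_sum
          intro k hkk
          obtain ⟨hk, hkn⟩ := Finset.mem_Ico.1 hkk
          have hk0 : (0:ℝ) < k := by exact_mod_cast (by omega : 0 < k)
          have hk1 : (1:ℝ) ≤ (k:ℝ) := by exact_mod_cast (by omega : 1 ≤ k)
          have hkn' : (k:ℝ) ≤ (n:ℝ) := by exact_mod_cast hkn.le
          have hdivpos : (0:ℝ) < (n:ℝ)/k := by positivity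
          have hlogle : Real.log ((n:ℝ)/k) ≤ Real.log (n:ℝ) :=
            Real.log_le_log hdivpos (by rw [div_le_iff₀ hk0]; nlinarith)
          have hlognn : 0 ≤ Real.log ((n:ℝ)/k) := Real.log_nonneg ((one_le_div hk0).2 hkn')
          have hlple : Real.log ((n:ℝ)/k) ^ p ≤ Real.log (n:ℝ) ^ p :=
            Real.rpow_le_rpow hlognn hlogle hp
          have ekinv : (k:ℝ) ^ (u*s - 2*u) = ((k:ℝ))⁻¹ := by
            rw [hα, Real.rpow_neg_one]
          have step : K * ((k:ℝ) ^ (u*s - 2*u) * Real.log ((n:ℝ)/k) ^ p)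
              ≤ K * ((k:ℝ) ^ (u*s - 2*u) * Real.log (n:ℝ) ^ p) :=
            mul_le_mul_of_nonneg_left
              (mul_le_mul_of_nonneg_left hlple (Real.rpow_nonneg hk0.le _)) hK0.le
          calc (K * ((k:ℝ) ^ (u*s - 2*u) * Real.log ((n:ℝ)/k) ^ p)) * (n:ℝ) ^ (-(u*s))
              ≤ (K * ((k:ℝ) ^ (u*s - 2*u) * Real.log (n:ℝ) ^ p)) * (n:ℝ) ^ (-(u*s)) :=
                mul_le_mul_of_nonneg_right step hM
            _ = (K * Real.log (n:ℝ) ^ p * (n:ℝ) ^ (-(u*s))) * ((k:ℝ))⁻¹ := by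
                rw [ekinv]
                ring
      _ = (K * Real.log (n:ℝ) ^ p * (n:ℝ) ^ (-(u*s)))
            * ∑ k ∈ Finset.Ico m0 n, ((k:ℝ))⁻¹ := by rw [← Finset.mul_sum]
      _ ≤ (K * Real.log (n:ℝ) ^ p * (n:ℝ) ^ (-(u*s))) * (2 * Real.log n) := by
          apply mul_le_mul_of_nonneg_left _ (by positivity)
          refine le_trans (Finset.sum_le_sum_of_subset_of_nonneg
            (Finset.Ico_subset_Ico (by omega) le_rfl)
            (fun i _ _ => by positivity)) (aux_harmonic n hn3)
      _ = K * 2 * ((n:ℝ) ^ (-(u*s)) * Real.log (n:ℝ) ^ p * Real.log (n:ℝ)) := by ring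
  · -- case u*s > 2u - 1
    intro hgt
    have hα1 : -1 < u*s - 2*u := by linarith
    set δ := (u*s - 2*u + 1)/2 with hδ_def
    have hδ0 : 0 < δ := by rw [hδ_def]; linarith
    obtain ⟨CL, hCL0, hCL⟩ := aux_log_rpow_le p δ hp hδ0
    obtain ⟨C₂, hC₂0, hC₂⟩ := aux_sum_rpow_le (u*s - 2*u - δ) (by rw [hδ_def]; linarith)
    rw [isBigO_iff]
    refine ⟨K * CL * C₂, ?_⟩
    rw [eventually_atTop]
    refine ⟨max (m0+1) 3, fun n hn => ?_⟩
    have hn3 : 3 ≤ n := le_trans (le_max_right _ _) hn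
    have hnm0 : m0 < n := by
      have := le_trans (le_max_left (m0+1) 3) hn; omega
    have hn0 : (0:ℝ) < n := by exact_mod_cast (by omega : 0 < n)
    have hn1 : (1:ℝ) ≤ n := by exact_mod_cast (by omega : 1 ≤ n)
    have hM : 0 ≤ (n:ℝ) ^ (-(u*s)) := Real.rpow_nonneg hn0.le _
    rw [Real.norm_eq_abs, Real.norm_eq_abs,
      abs_of_nonneg (Finset.sum_nonneg (hsummand_nn n)),
      abs_of_nonneg (Real.rpow_nonneg hn0.le _)]
    have e5 : ((n:ℝ) ^ (-(u*s)) * (n:ℝ) ^ δ) * (n:ℝ) ^ (u*s - 2*u - δ + 1)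
        = (n:ℝ) ^ (-(2*u-1)) := by
      rw [← Real.rpow_add hn0, ← Real.rpow_add hn0]
      congr 1
      ring
    calc (∑ k ∈ Finset.Ico m0 n, r k ^ (2*u) * Real.log ((n:ℝ)/k) ^ p *
            (‖pprod r m0 x n‖ * ‖pprod r m0 y n‖ /
              (‖pprod r m0 x k‖ * ‖pprod r m0 y k‖)) ^ u)
        ≤ ∑ k ∈ Finset.Ico m0 n,
            (K * ((k:ℝ) ^ (u*s - 2*u) * Real.log ((n:ℝ)/k) ^ p)) * (n:ℝ) ^ (-(u*s)) := hsum1 n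
      _ ≤ ∑ k ∈ Finset.Ico m0 n,
            (K * CL * ((n:ℝ) ^ (-(u*s)) * (n:ℝ) ^ δ)) * (k:ℝ) ^ (u*s - 2*u - δ) := by
          apply Finset.sum_le_sum
          intro k hkk
          obtain ⟨hk, hkn⟩ := Finset.mem_Ico.1 hkk
          have hk0 : (0:ℝ) < k := by exact_mod_cast (by omega : 0 < k)
          have hk1 : (1:ℝ) ≤ (k:ℝ) := by exact_mod_cast (by omega : 1 ≤ k)
          have hkn' : (k:ℝ) ≤ (n:ℝ) := by exact_mod_cast hkn.le
          have hdiv1 : (1:ℝ) ≤ (n:ℝ)/k := (one_le_div hk0).2 hkn'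
          have hlog_bd : Real.log ((n:ℝ)/k) ^ p ≤ CL * ((n:ℝ)/k) ^ δ := hCL _ hdiv1
          have step : K * ((k:ℝ) ^ (u*s - 2*u) * Real.log ((n:ℝ)/k) ^ p)
              ≤ K * ((k:ℝ) ^ (u*s - 2*u) * (CL * ((n:ℝ)/k) ^ δ)) :=
            mul_le_mul_of_nonneg_left
              (mul_le_mul_of_nonneg_left hlog_bd (Real.rpow_nonneg hk0.le _)) hK0.le
          have ekk : ((n:ℝ)/k) ^ δ = (n:ℝ) ^ δ * ((k:ℝ)) ^ (-δ) := by
            rw [Real.div_rpow hn0.le hk0.le, Real.rpow_neg hk0.le, div_eq_mul_inv]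
          have ekk2 : (k:ℝ) ^ (u*s - 2*u) * (k:ℝ) ^ (-δ) = (k:ℝ) ^ (u*s - 2*u - δ) := by
            rw [← Real.rpow_add hk0, ← sub_eq_add_neg]
          have ek : (k:ℝ) ^ (u*s - 2*u) * ((n:ℝ)/k) ^ δ
              = (n:ℝ) ^ δ * (k:ℝ) ^ (u*s - 2*u - δ) := by
            rw [ekk, ← ekk2]
            ring
          calc (K * ((k:ℝ) ^ (u*s - 2*u) * Real.log ((n:ℝ)/k) ^ p)) * (n:ℝ) ^ (-(u*s))
              ≤ (K * ((k:ℝ) ^ (u*s - 2*u) * (CL * ((n:ℝ)/k) ^ δ))) * (n:ℝ) ^ (-(u*s)) :=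
                mul_le_mul_of_nonneg_right step hM
            _ = (K * CL * ((n:ℝ) ^ (-(u*s)) * (n:ℝ) ^ δ)) * (k:ℝ) ^ (u*s - 2*u - δ) := by
                have e6 : K * ((k:ℝ) ^ (u*s - 2*u) * (CL * ((n:ℝ)/k) ^ δ)) * (n:ℝ) ^ (-(u*s))
                    = K * CL * (n:ℝ) ^ (-(u*s)) *
                        ((k:ℝ) ^ (u*s - 2*u) * ((n:ℝ)/k) ^ δ) := by ring
                rw [e6, ek]
                ring
      _ = (K * CL * ((n:ℝ) ^ (-(u*s)) * (n:ℝ) ^ δ))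
            * ∑ k ∈ Finset.Ico m0 n, (k:ℝ) ^ (u*s - 2*u - δ) := by rw [← Finset.mul_sum]
      _ ≤ (K * CL * ((n:ℝ) ^ (-(u*s)) * (n:ℝ) ^ δ))
            * (C₂ * (n:ℝ) ^ (u*s - 2*u - δ + 1)) := by
          apply mul_le_mul_of_nonneg_left _ (by positivity)
          refine le_trans (Finset.sum_le_sum_of_subset_of_nonneg
            (Finset.Ico_subset_Ico (by omega) le_rfl)
            (fun i _ _ => Real.rpow_nonneg i.cast_nonneg _)) (hC₂ n (by omega))
      _ = K * CL * C₂ * (((n:ℝ) ^ (-(u*s)) * (n:ℝ) ^ δ) * (n:ℝ) ^ (u*s - 2*u - δ + 1)) := by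
          ring
      _ = K * CL * C₂ * (n:ℝ) ^ (-(2*u-1)) := by rw [e5]

/-- **Lemma `lemma-tecnico_2` (ii)**: big-O bounds for
`∑_{k=m₀}^{n-1} r_k^{2u} ln^{eu}(n/k) (|p_n(x)||p_n(y)|/(|p_k(x)||p_k(y)|))^u`, `u ≥ 1`,
in the critical case `c(a_x+a_y) = 1` (with `e = 0`) and in the case `c(a_x+a_y) > 1`
(with `e ∈ {0,1,2}`), according to the position of `uc(a_x+a_y)` relative to `2u-1`. -/
theorem product_sum_bigO
    (c : ℝ) (hc : 0 < c) (r : ℕ → ℝ) (hr0 : ∀ n, 0 ≤ r n) (hr1 : ∀ n, r n < 1)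
    (hrO : (fun n : ℕ => (n : ℝ) * r n - c) =O[atTop] fun n : ℕ => (n : ℝ)⁻¹)
    (x y : ℂ) (hx : 0 < x.re) (hy : 0 < y.re)
    (hge : 1 ≤ c * (x.re + y.re))
    (m0 : ℕ) (hm0 : 2 ≤ m0) (hm : ∀ m, m0 ≤ m → max x.re y.re * r m < 1)
    (u : ℝ) (hu : 1 ≤ u) :
    (c * (x.re + y.re) = 1 →
      (u = 1 →
        (fun n : ℕ => ∑ k ∈ Finset.Ico m0 n, r k ^ (2 * u) *
            (‖pprod r m0 x n‖ * ‖pprod r m0 y n‖ /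
              (‖pprod r m0 x k‖ * ‖pprod r m0 y k‖)) ^ u)
          =O[atTop] fun n : ℕ => Real.log n / n) ∧
      (1 < u →
        (fun n : ℕ => ∑ k ∈ Finset.Ico m0 n, r k ^ (2 * u) *
            (‖pprod r m0 x n‖ * ‖pprod r m0 y n‖ /
              (‖pprod r m0 x k‖ * ‖pprod r m0 y k‖)) ^ u)
          =O[atTop] fun n : ℕ => (n : ℝ) ^ (-u))) ∧
    (1 < c * (x.re + y.re) → ∀ e : ℕ, e ≤ 2 →
      (u * (c * (x.re + y.re)) < 2 * u - 1 →
        (fun n : ℕ => ∑ k ∈ Finset.Ico m0 n, r k ^ (2 * u) *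
            Real.log ((n : ℝ) / k) ^ ((e : ℝ) * u) *
            (‖pprod r m0 x n‖ * ‖pprod r m0 y n‖ /
              (‖pprod r m0 x k‖ * ‖pprod r m0 y k‖)) ^ u)
          =O[atTop] fun n : ℕ =>
            (n : ℝ) ^ (-(u * (c * (x.re + y.re)))) * Real.log n ^ ((e : ℝ) * u)) ∧
      (u * (c * (x.re + y.re)) = 2 * u - 1 →
        (fun n : ℕ => ∑ k ∈ Finset.Ico m0 n, r k ^ (2 * u) *
            Real.log ((n : ℝ) / k) ^ ((e : ℝ) * u) *
            (‖pprod r m0 x n‖ * ‖pprod r m0 y n‖ /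
              (‖pprod r m0 x k‖ * ‖pprod r m0 y k‖)) ^ u)
          =O[atTop] fun n : ℕ =>
            (n : ℝ) ^ (-(2 * u - 1)) * Real.log n ^ ((e : ℝ) * u + 1)) ∧
      (2 * u - 1 < u * (c * (x.re + y.re)) →
        (fun n : ℕ => ∑ k ∈ Finset.Ico m0 n, r k ^ (2 * u) *
            Real.log ((n : ℝ) / k) ^ ((e : ℝ) * u) *
            (‖pprod r m0 x n‖ * ‖pprod r m0 y n‖ /
              (‖pprod r m0 x k‖ * ‖pprod r m0 y k‖)) ^ u)
          =O[atTop] fun n : ℕ => (n : ℝ) ^ (-(2 * u - 1)))) := by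
  have H := fun (p : ℝ) (hp : 0 ≤ p) =>
    main_aux c hc r hr0 hr1 hrO x y hx hy hge m0 hm0 hm u hu p hp
  constructor
  · intro hs1
    constructor
    · intro hu1
      subst hu1
      have H2 := (H 0 le_rfl).2.1 (by rw [hs1]; ring)
      refine H2.congr' ?_ ?_
      · refine Filter.EventuallyEq.of_eq (funext fun n => ?_)
        refine Finset.sum_congr rfl fun k _ => ?_
        rw [Real.rpow_zero, mul_one]
      · filter_upwards [eventually_ge_atTop 1] with n hn
        have hn0 : (0:ℝ) < n := by exact_mod_cast (by omega : 0 < n)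
        have e1 : -(2 * (1:ℝ) - 1) = -1 := by norm_num
        have e2 : (0:ℝ) + 1 = 1 := by norm_num
        rw [e1, e2, Real.rpow_neg_one, Real.rpow_one]
        rw [inv_mul_eq_div]
    · intro hu1
      have H2 := (H 0 le_rfl).1 (by rw [hs1, mul_one]; linarith)
      refine H2.congr' ?_ ?_
      · refine Filter.EventuallyEq.of_eq (funext fun n => ?_)
        refine Finset.sum_congr rfl fun k _ => ?_
        rw [Real.rpow_zero, mul_one]
      · refine Filter.EventuallyEq.of_eq (funext fun n => ?_)
        rw [hs1, mul_one, Real.rpow_zero, mul_one]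
  · intro _ e _
    have hp : (0:ℝ) ≤ (e : ℝ) * u := mul_nonneg (Nat.cast_nonneg e) (by linarith)
    have H2 := H ((e:ℝ) * u) hp
    exact ⟨H2.1, H2.2.1, H2.2.2⟩

end
end
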